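/- arXiv:0708.1919 — 3 statements merged into one kernel-verified Lean document; each statement's English description precedes it below -/
import Mathlib

section
/- Let p : ℕ → (0,1] be any function, let C > 0, let κ : [0,1]² → [0,C] be a kernel, and let (G_n) be a sequence of graphs with |G_n| = n and δ_□(G_n,κ) → 0. Then (G_n) has density bounded by C. -/
open MeasureTheory Set Filter
open scoped ENNReal Classical

noncomputable section

/-- The (0-based) index of the subinterval `((i)/n, (i+1)/n]` of `[0,1]` containing `x`. -/
def idx (n : ℕ) (x : ℝ) : ℕ := ⌈x * n⌉₊ - 1

/-- The subset of `[0,1]` corresponding to a set of vertices of a graph on `Fin n`: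
the union of the intervals `(i/n, (i+1)/n]` for `i ∈ X` (vertices `0`-indexed). -/
def vtxSet (n : ℕ) (X : Finset (Fin n)) : Set ℝ :=
  ⋃ i ∈ X, Ioc ((i : ℝ) / n) (((i : ℝ) + 1) / n)

/-- The kernel associated to a graph `G` on `{1,…,n}` and normalizing constant `p`:
it takes the value `1/p` on `((i−1)/n, i/n] × ((j−1)/n, j/n]` whenever `ij ∈ E(G)`,
and `0` elsewhere. -/
def graphKernel {n : ℕ} (p : ℝ) (G : SimpleGraph (Fin n)) : ℝ → ℝ → ℝ := fun x y =>
  if h : x ∈ Ioc (0:ℝ) 1 ∧ y ∈ Ioc (0:ℝ) 1 ∧ idx n x < n ∧ idx n y < n then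
    (if G.Adj ⟨idx n x, h.2.2.1⟩ ⟨idx n y, h.2.2.2⟩ then 1 / p else 0)
  else 0

/-- The cut norm of `W : [0,1]² → ℝ`. -/
def cutNorm (W : ℝ → ℝ → ℝ) : ℝ :=
  sSup {r | ∃ S T : Set ℝ, MeasurableSet S ∧ MeasurableSet T ∧
    S ⊆ Icc 0 1 ∧ T ⊆ Icc 0 1 ∧ r = |∫ q in S ×ˢ T, W q.1 q.2|}

/-- `τ` is a Lebesgue-measure-preserving bijection of `[0,1]`. -/
def MPBij (τ : ℝ → ℝ) : Prop :=
  MeasurePreserving τ (volume.restrict (Icc 0 1)) (volume.restrict (Icc 0 1)) ∧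
    BijOn τ (Icc 0 1) (Icc 0 1)

/-- The cut distance between two kernels. -/
def cutDist (κ₁ κ₂ : ℝ → ℝ → ℝ) : ℝ :=
  sInf {r | ∃ τ : ℝ → ℝ, MPBij τ ∧ r = cutNorm (fun x y => κ₁ x y - κ₂ (τ x) (τ y))}

/-- The number of homomorphisms from `F` to `G`. -/
def homCount {α β : Type*} (F : SimpleGraph α) (G : SimpleGraph β) : ℕ :=
  Nat.card (F →g G)

/-- The number of injective homomorphisms (embeddings) from `F` to `G`. -/
def embCount {α β : Type*} (F : SimpleGraph α) (G : SimpleGraph β) : ℕ :=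
  Nat.card {φ : F →g G // Function.Injective φ}

/-- The number of edges of a graph. -/
def edgeCount {α : Type*} (F : SimpleGraph α) : ℕ := Nat.card F.edgeSet

/-- The normalized homomorphism count `t_p(F,G)`. -/
def tDen {α β : Type*} [Fintype α] [Fintype β] (p : ℝ) (F : SimpleGraph α)
    (G : SimpleGraph β) : ℝ :=
  homCount F G / (p ^ edgeCount F * (Fintype.card β : ℝ) ^ Fintype.card α)

/-- The normalized embedding count `s_p(F,G)`. -/
def sDen {α β : Type*} [Fintype α] [Fintype β] (p : ℝ) (F : SimpleGraph α)
    (G : SimpleGraph β) : ℝ :=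
  embCount F G / (p ^ edgeCount F * ((Fintype.card β).descFactorial (Fintype.card α) : ℝ))

/-- The homomorphism density `s(F,κ)` of a finite graph in a kernel. -/
def homDensity {α : Type*} [Fintype α] (F : SimpleGraph α) (κ : ℝ → ℝ → ℝ) : ℝ :=
  ∫ x in Set.univ.pi (fun _ : α => Icc (0:ℝ) 1),
    ∏ e ∈ F.edgeFinset,
      Sym2.lift ⟨fun i j => (κ (x i) (x j) + κ (x j) (x i)) / 2,
        fun i j => by dsimp only; rw [add_comm (κ (x i) (x j)) (κ (x j) (x i))]⟩ e

/-- The homomorphism density as a lower integral (for possibly unbounded kernels). -/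
def homDensityL {α : Type*} [Fintype α] (F : SimpleGraph α) (κ : ℝ → ℝ → ℝ) : ℝ≥0∞ :=
  ∫⁻ x in Set.univ.pi (fun _ : α => Icc (0:ℝ) 1),
    ∏ e ∈ F.edgeFinset,
      Sym2.lift ⟨fun i j => ENNReal.ofReal ((κ (x i) (x j) + κ (x j) (x i)) / 2),
        fun i j => by dsimp only; rw [add_comm (κ (x i) (x j)) (κ (x j) (x i))]⟩ e

/-- A kernel: a symmetric measurable function `[0,1]² → [0,∞)`. -/
def IsKernel (κ : ℝ → ℝ → ℝ) : Prop :=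
  Measurable (Function.uncurry κ) ∧ (∀ x y, κ x y = κ y x) ∧ ∀ x y, 0 ≤ κ x y

/-- A kernel taking values in `[0,C]`. -/
def IsKernelBdd (κ : ℝ → ℝ → ℝ) (C : ℝ) : Prop :=
  Measurable (Function.uncurry κ) ∧ (∀ x y, κ x y = κ y x) ∧ ∀ x y, κ x y ∈ Icc 0 C

/-- A standard kernel: a symmetric measurable function `[0,1]² → [0,1]`. -/
def IsStdKernel (κ : ℝ → ℝ → ℝ) : Prop := IsKernelBdd κ 1

/-- A doubly stochastic measure: a Borel measure on `[0,1]²` both of whose marginals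
are Lebesgue measure on `[0,1]`. -/
def IsDoublyStochastic (μ : Measure (ℝ × ℝ)) : Prop :=
  μ.map Prod.fst = volume.restrict (Icc 0 1) ∧ μ.map Prod.snd = volume.restrict (Icc 0 1)

/-- The quantity `d_μ(κ₁,κ₂)`. -/
def dMu (μ : Measure (ℝ × ℝ)) (κ₁ κ₂ : ℝ → ℝ → ℝ) : ℝ :=
  sSup {r | ∃ S T : Set (ℝ × ℝ), MeasurableSet S ∧ MeasurableSet T ∧
    S ⊆ Icc 0 1 ×ˢ Icc 0 1 ∧ T ⊆ Icc 0 1 ×ˢ Icc 0 1 ∧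
    r = |∫ w in S ×ˢ T, (κ₁ w.1.1 w.2.1 - κ₂ w.1.2 w.2.2) ∂(μ.prod μ)|}

/-- Equivalence of kernels via a coupling. -/
def KernelEquiv (κ₁ κ₂ : ℝ → ℝ → ℝ) : Prop :=
  ∃ μ : Measure (ℝ × ℝ), IsDoublyStochastic μ ∧
    ∀ᵐ w ∂(μ.prod μ), κ₁ w.1.1 w.2.1 = κ₂ w.1.2 w.2.2

/-- `e_G(A,B)`: the number of ordered pairs `(i,j) ∈ A × B` with `ij ∈ E(G)`. -/
def ePairs {n : ℕ} (G : SimpleGraph (Fin n)) (A B : Finset (Fin n)) : ℕ :=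
  ((A ×ˢ B).filter fun q => G.Adj q.1 q.2).card

/-- The normalized density `d_p(A,B)`. -/
def dDens {n : ℕ} (p : ℝ) (G : SimpleGraph (Fin n)) (A B : Finset (Fin n)) : ℝ :=
  ePairs G A B / (p * A.card * B.card)

/-- A sequence of graphs has density bounded by `C`. -/
def DensityBoundedBy (p : ℕ → ℝ) (G : ∀ n, SimpleGraph (Fin n)) (C : ℝ) : Prop :=
  ∀ ε > (0:ℝ), ∀ δ > (0:ℝ), ∀ᶠ n in atTop, ∀ A B : Finset (Fin n),
    ε * n ≤ A.card → ε * n ≤ B.card → dDens (p n) (G n) A B ≤ C + δ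

/-- The parts of a partition of `Fin n` indexed by `Fin k`, given as a colouring. -/
def fiber {n k : ℕ} (c : Fin n → Fin k) (a : Fin k) : Finset (Fin n) :=
  Finset.univ.filter fun v => c v = a

/-- The finite-type kernel `G/Π` associated to a partition of the vertex set of `G`. -/
def partKernel {n k : ℕ} (p : ℝ) (G : SimpleGraph (Fin n)) (c : Fin n → Fin k) :
    ℝ → ℝ → ℝ := fun x y =>
  if h : x ∈ Ioc (0:ℝ) 1 ∧ y ∈ Ioc (0:ℝ) 1 ∧ idx n x < n ∧ idx n y < n then
    dDens p G (fiber c (c ⟨idx n x, h.2.2.1⟩)) (fiber c (c ⟨idx n y, h.2.2.2⟩))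
  else 0

/-- A partition is weakly `(ε,p)`-regular for `G`. -/
def WeaklyRegular {n k : ℕ} (p ε : ℝ) (G : SimpleGraph (Fin n)) (c : Fin n → Fin k) : Prop :=
  cutNorm (fun x y => graphKernel p G x y - partKernel p G c x y) ≤ ε

/-- `(A,B)` is an `(ε,p)`-regular pair for `G`. -/
def RegPair {n : ℕ} (p ε : ℝ) (G : SimpleGraph (Fin n)) (A B : Finset (Fin n)) : Prop :=
  ∀ A' ⊆ A, ∀ B' ⊆ B, ε * A.card ≤ A'.card → ε * B.card ≤ B'.card →
    |dDens p G A' B' - dDens p G A B| ≤ ε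

/-- An `(ε,p)`-regular partition of `G` into `k` parts. -/
def RegPartition {n k : ℕ} (p ε : ℝ) (G : SimpleGraph (Fin n)) (c : Fin n → Fin k) : Prop :=
  (∀ a : Fin k, (fiber c a).card = n / k ∨ (fiber c a).card = n / k + 1) ∧
  ((Finset.univ.filter (fun q : Fin k × Fin k =>
      q.1 < q.2 ∧ ¬ RegPair p ε G (fiber c q.1) (fiber c q.2))).card : ℝ)
    ≤ ε * ((k : ℝ) * ((k : ℝ) - 1) / 2)

/-- The number of walks `v₀v₁⋯v_ℓ` in `G` with `v_i ∈ X_i` for each `i`. -/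
def walkCount {n ℓ : ℕ} (G : SimpleGraph (Fin n)) (X : Fin (ℓ+1) → Finset (Fin n)) : ℕ :=
  Nat.card {v : Fin (ℓ+1) → Fin n //
    (∀ i, v i ∈ X i) ∧ ∀ i : Fin ℓ, G.Adj (v i.castSucc) (v i.succ)}

/-- `κ(X₀,X₁,…,X_ℓ)`: the kernel analogue of the walk count. -/
def kernelWalk {ℓ : ℕ} (κ : ℝ → ℝ → ℝ) (X : Fin (ℓ+1) → Set ℝ) : ℝ :=
  ∫ x in Set.univ.pi X, ∏ i : Fin ℓ, κ (x i.castSucc) (x i.succ)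

/-- `p_t(u,v)`: the number of paths of length `t` in `G` from `u` to `v`. -/
def pathCount {n : ℕ} (G : SimpleGraph (Fin n)) (t : ℕ) (u v : Fin n) : ℕ :=
  Nat.card {w : Fin (t+1) → Fin n // w 0 = u ∧ w (Fin.last t) = v ∧
    Function.Injective w ∧ ∀ i : Fin t, G.Adj (w i.castSucc) (w i.succ)}

/-- The `i`-th vertex on the `r`-th subdivided edge (from `u r` to `v r`, `ℓ` steps). -/
def pv (ℓ : ℕ) {k m : ℕ} (u v : Fin m → Fin k) (r : Fin m) (i : ℕ) :
    Fin k ⊕ (Fin m × Fin (ℓ - 1)) :=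
  if h0 : i = 0 then Sum.inl (u r)
  else if h : i < ℓ then Sum.inr (r, ⟨i - 1, by omega⟩)
  else Sum.inl (v r)

/-- The `(ℓ−1)`-fold subdivision of the loopless multigraph with `k` vertices and
edges `u r — v r` for `r < m`. -/
def multiSubdiv (ℓ : ℕ) {k m : ℕ} (u v : Fin m → Fin k) :
    SimpleGraph (Fin k ⊕ (Fin m × Fin (ℓ - 1))) :=
  SimpleGraph.fromRel fun a b =>
    ∃ r : Fin m, ∃ i : ℕ, i < ℓ ∧ a = pv ℓ u v r i ∧ b = pv ℓ u v r (i + 1)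

/-- Membership in the family `F_ℓ` of `(ℓ−1)`-fold subdivisions of finite loopless
multigraphs. -/
def InFamilyF (ℓ : ℕ) {N : ℕ} (F : SimpleGraph (Fin N)) : Prop :=
  ∃ (k m : ℕ) (u v : Fin m → Fin k), 1 ≤ k ∧ (∀ r, u r ≠ v r) ∧
    Nonempty (F ≃g multiSubdiv ℓ u v)

/-- The edges of a simple graph on `Fin k`, as ordered pairs `(i,j)` with `i < j`. -/
abbrev edgeIdx {k : ℕ} (F : SimpleGraph (Fin k)) : Type :=
  {q : Fin k × Fin k // q.1 < q.2 ∧ F.Adj q.1 q.2}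

/-- The `i`-th vertex on the subdivision of the edge `e` (`t` steps). -/
def spv (t : ℕ) {k : ℕ} {F : SimpleGraph (Fin k)} (e : edgeIdx F) (i : ℕ) :
    Fin k ⊕ (edgeIdx F × Fin (t - 1)) :=
  if h0 : i = 0 then Sum.inl e.1.1
  else if h : i < t then Sum.inr (e, ⟨i - 1, by omega⟩)
  else Sum.inl e.1.2

/-- The `t`-subdivision `Sub_t(F)` of a simple graph `F`: each edge is replaced by a
path of length `t` through `t−1` new internal vertices. -/
def subdiv (t : ℕ) {k : ℕ} (F : SimpleGraph (Fin k)) :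
    SimpleGraph (Fin k ⊕ (edgeIdx F × Fin (t - 1))) :=
  SimpleGraph.fromRel fun a b =>
    ∃ e : edgeIdx F, ∃ i : ℕ, i < t ∧ a = spv t e i ∧ b = spv t e (i + 1)

/-- The `t`-th power kernel `κ^t`. -/
def kpow (κ : ℝ → ℝ → ℝ) : ℕ → ℝ → ℝ → ℝ
  | 0 => fun _ _ => 0
  | 1 => κ
  | (n + 2) => fun x y => ∫ z in Icc (0:ℝ) 1, kpow κ (n + 1) x z * κ z y

/-- `φ : Fin ℓ → Fin n` is a homomorphism from `F` to `G`. -/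
def IsHom {α β : Type*} (F : SimpleGraph α) (G : SimpleGraph β) (φ : α → β) : Prop :=
  ∀ i j, F.Adj i j → G.Adj (φ i) (φ j)

/-- `F` is flat over its induced subgraph `F'` on the first `ℓ` vertices, for the
sequence `(G_n)` with normalizing function `p`. -/
def FlatOver (p : ℕ → ℝ) (G : ∀ n, SimpleGraph (Fin n)) {k ℓ : ℕ} (h : ℓ ≤ k)
    (F : SimpleGraph (Fin k)) : Prop :=
  ∀ ε > (0:ℝ), ∀ᶠ n in atTop,
    ((Finset.univ.filter (fun φ : Fin ℓ → Fin n =>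
        IsHom (F.comap (Fin.castLE h)) (G n) φ ∧
        ε * ((n:ℝ) ^ (k - ℓ) * p n ^ (edgeCount F - edgeCount (F.comap (Fin.castLE h)))) <
          |((Finset.univ.filter (fun ψ : Fin k → Fin n =>
              IsHom F (G n) ψ ∧ ψ ∘ Fin.castLE h = φ)).card : ℝ) -
            (n:ℝ) ^ (k - ℓ) * p n ^ (edgeCount F - edgeCount (F.comap (Fin.castLE h)))|)).card
      : ℝ)
      ≤ ε * ((Finset.univ.filter (fun φ : Fin ℓ → Fin n =>
          IsHom (F.comap (Fin.castLE h)) (G n) φ)).card : ℝ)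

/-- The set of density matrices of balanced partitions of `V(G)` into `k` nonempty
parts. -/
def MsetG (k : ℕ) {n : ℕ} (p : ℝ) (G : SimpleGraph (Fin n)) : Set (Fin k → Fin k → ℝ) :=
  {M | ∃ c : Fin n → Fin k, Function.Surjective c ∧
    (∀ a b, (fiber c a).card ≤ (fiber c b).card + 1) ∧
    M = fun a b => dDens p G (fiber c a) (fiber c b)}

/-- The closed set of density matrices of partitions of `[0,1]` into `k` parts of
measure `1/k`, for a kernel `κ`. -/
def MsetK (k : ℕ) (κ : ℝ → ℝ → ℝ) : Set (Fin k → Fin k → ℝ) :=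
  closure {M | ∃ Q : Fin k → Set ℝ, (∀ a, MeasurableSet (Q a)) ∧
    (Pairwise fun a b => Disjoint (Q a) (Q b)) ∧ (⋃ a, Q a) = Icc 0 1 ∧
    (∀ a, volume (Q a) = 1 / (k : ℝ≥0∞)) ∧
    M = fun a b => (k : ℝ)^2 * ∫ q in (Q a) ×ˢ (Q b), κ q.1 q.2}

end



noncomputable section

def box (n i : ℕ) : Set ℝ := Ioc ((i : ℝ) / n) (((i : ℝ) + 1) / n)

lemma mem_box_idx {n i : ℕ} (hi : i < n) {x : ℝ} (hx : x ∈ box n i) :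
    x ∈ Ioc (0:ℝ) 1 ∧ idx n x = i := by
  have hn : (0:ℝ) < n := by exact_mod_cast Nat.zero_lt_of_lt hi
  obtain ⟨h1, h2⟩ := hx
  have hx0 : 0 < x := lt_of_le_of_lt (by positivity) h1
  have hx1 : x ≤ 1 := by
    have : ((i:ℝ) + 1) / n ≤ 1 := by
      rw [div_le_one hn]; exact_mod_cast Nat.succ_le_of_lt hi
    linarith
  have hlow : (i : ℝ) < x * n := by
    rw [div_lt_iff₀ hn] at h1; linarith
  have hhigh : x * n ≤ (i : ℝ) + 1 := by
    rw [le_div_iff₀ hn] at h2; linarith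
  refine ⟨⟨hx0, hx1⟩, ?_⟩
  have hceil : ⌈x * n⌉₊ = i + 1 := by
    rw [Nat.ceil_eq_iff (Nat.succ_ne_zero i)]
    constructor
    · simpa using hlow
    · exact_mod_cast hhigh
  simp [idx, hceil]

lemma idx_mem_box {n : ℕ} {x : ℝ} (hx : x ∈ Ioc (0:ℝ) 1) (h : idx n x < n) :
    x ∈ box n (idx n x) := by
  have hn : (0:ℝ) < n := by
    have : 0 < n := by omega
    exact_mod_cast this
  have hxn : 0 < x * n := mul_pos hx.1 hn
  have hm1 : 1 ≤ ⌈x * n⌉₊ := Nat.one_le_iff_ne_zero.2 (by positivity)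
  have hcast : ((idx n x : ℕ) : ℝ) = (⌈x * n⌉₊ : ℝ) - 1 := by
    have : (idx n x) + 1 = ⌈x * n⌉₊ := by simp only [idx]; omega
    push_cast [← this]; ring
  constructor
  · rw [div_lt_iff₀ hn, hcast]
    have := Nat.ceil_lt_add_one (le_of_lt hxn)
    linarith
  · rw [le_div_iff₀ hn, hcast]
    have := Nat.le_ceil (x * n)
    linarith

lemma gk_eq {n : ℕ} (p : ℝ) (G : SimpleGraph (Fin n)) (x y : ℝ) :
    graphKernel p G x y = ∑ i : Fin n, ∑ j : Fin n,
      ((box n (i:ℕ)) ×ˢ (box n (j:ℕ))).indicator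
        (fun _ => if G.Adj i j then 1 / p else 0) (x, y) := by
  by_cases h : x ∈ Ioc (0:ℝ) 1 ∧ y ∈ Ioc (0:ℝ) 1 ∧ idx n x < n ∧ idx n y < n
  · rw [graphKernel, dif_pos h]
    set i0 : Fin n := ⟨idx n x, h.2.2.1⟩ with hi0
    set j0 : Fin n := ⟨idx n y, h.2.2.2⟩ with hj0
    have hxmem : x ∈ box n (i0:ℕ) := idx_mem_box h.1 h.2.2.1
    have hymem : y ∈ box n (j0:ℕ) := idx_mem_box h.2.1 h.2.2.2
    rw [Finset.sum_eq_single i0]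
    · rw [Finset.sum_eq_single j0]
      · rw [Set.indicator_of_mem (Set.mk_mem_prod hxmem hymem)]
      · intro j _ hj
        apply Set.indicator_of_notMem
        intro hmem
        exact hj (Fin.ext ((mem_box_idx j.isLt hmem.2).2.symm))
      · intro hmem; exact absurd (Finset.mem_univ _) hmem
    · intro i _ hi
      apply Finset.sum_eq_zero
      intro j _
      apply Set.indicator_of_notMem
      intro hmem
      exact hi (Fin.ext ((mem_box_idx i.isLt hmem.1).2.symm))
    · intro hmem; exact absurd (Finset.mem_univ _) hmem
  · rw [graphKernel, dif_neg h]
    symm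
    apply Finset.sum_eq_zero
    intro i _
    apply Finset.sum_eq_zero
    intro j _
    apply Set.indicator_of_notMem
    intro hmem
    obtain ⟨hx1, hx2⟩ := mem_box_idx i.isLt hmem.1
    obtain ⟨hy1, hy2⟩ := mem_box_idx j.isLt hmem.2
    exact h ⟨hx1, hy1, hx2 ▸ i.isLt, hy2 ▸ j.isLt⟩

lemma vtxSet_eq {n : ℕ} (X : Finset (Fin n)) : vtxSet n X = ⋃ i ∈ X, box n (i:ℕ) := rfl

lemma box_meas {n i : ℕ} : MeasurableSet (box n i) := measurableSet_Ioc

lemma vtxSet_meas {n : ℕ} (X : Finset (Fin n)) : MeasurableSet (vtxSet n X) := by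
  rw [vtxSet_eq]; exact X.measurableSet_biUnion (fun _ _ => box_meas)

lemma box_subset {n i : ℕ} (hi : i < n) : box n i ⊆ Icc 0 1 :=
  fun x hx => Ioc_subset_Icc_self (mem_box_idx hi hx).1

lemma vtxSet_subset {n : ℕ} (X : Finset (Fin n)) : vtxSet n X ⊆ Icc 0 1 := by
  rw [vtxSet_eq]
  exact Set.iUnion₂_subset fun i _ => box_subset i.isLt

lemma box_vol {n i : ℕ} : volume (box n i) = ENNReal.ofReal (1 / n) := by
  rw [box, Real.volume_Ioc]
  congr 1
  rw [div_sub_div_same]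
  ring_nf

lemma box_pd {n : ℕ} (X : Finset (Fin n)) :
    (↑X : Set (Fin n)).PairwiseDisjoint (fun i : Fin n => box n (i:ℕ)) := by
  intro i _ j _ hij
  rw [Function.onFun, Set.disjoint_left]
  intro x hxi hxj
  exact hij (Fin.ext (((mem_box_idx i.isLt hxi).2.symm).trans (mem_box_idx j.isLt hxj).2))

lemma vtxSet_vol {n : ℕ} (X : Finset (Fin n)) :
    volume (vtxSet n X) = (X.card : ℝ≥0∞) * ENNReal.ofReal (1 / n) := by
  rw [vtxSet_eq, measure_biUnion_finset (box_pd X) (fun _ _ => box_meas)]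
  simp [box_vol, Finset.sum_const, nsmul_eq_mul]

lemma vtxSet_inter_box {n : ℕ} (X : Finset (Fin n)) (i : Fin n) :
    vtxSet n X ∩ box n (i:ℕ) = if i ∈ X then box n (i:ℕ) else ∅ := by
  split_ifs with h
  · rw [vtxSet_eq]
    apply Set.inter_eq_self_of_subset_right
    intro x hx
    exact Set.mem_biUnion h hx
  · ext x
    simp only [vtxSet_eq, Set.mem_inter_iff, Set.mem_iUnion, Set.mem_empty_iff_false,
      iff_false, not_and, forall_exists_index]
    rintro j hj hxj hxi
    have : j = i := Fin.ext (((mem_box_idx j.isLt hxj).2.symm).trans (mem_box_idx i.isLt hxi).2)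
    exact h (this ▸ hj)

lemma measurable_gk {n : ℕ} (p : ℝ) (G : SimpleGraph (Fin n)) :
    Measurable (fun q : ℝ × ℝ => graphKernel p G q.1 q.2) := by
  have : (fun q : ℝ × ℝ => graphKernel p G q.1 q.2) = fun q : ℝ × ℝ =>
      ∑ i : Fin n, ∑ j : Fin n, ((box n (i:ℕ)) ×ˢ (box n (j:ℕ))).indicator
        (fun _ => if G.Adj i j then 1 / p else 0) q := by
    funext q
    rw [gk_eq]
  rw [this]
  apply Finset.measurable_sum
  intro i _
  apply Finset.measurable_sum
  intro j _
  exact Measurable.indicator measurable_const (box_meas.prod box_meas)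

lemma prodvol_lt_top {n : ℕ} (A B : Finset (Fin n)) :
    volume (vtxSet n A ×ˢ vtxSet n B) < ⊤ := by
  rw [show (volume : Measure (ℝ × ℝ)) = Measure.prod volume volume from
    Measure.volume_eq_prod ℝ ℝ, Measure.prod_prod, vtxSet_vol, vtxSet_vol]
  exact ENNReal.mul_lt_top (ENNReal.mul_lt_top (ENNReal.natCast_lt_top _) ENNReal.ofReal_lt_top)
    (ENNReal.mul_lt_top (ENNReal.natCast_lt_top _) ENNReal.ofReal_lt_top)

lemma integral_gk {n : ℕ} (p : ℝ) (G : SimpleGraph (Fin n)) (A B : Finset (Fin n)) :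
    ∫ q in (vtxSet n A) ×ˢ (vtxSet n B), graphKernel p G q.1 q.2
      = (ePairs G A B : ℝ) * (1 / p) * ((1 / n) * (1 / n)) := by
  have hrw : ∀ q : ℝ × ℝ, graphKernel p G q.1 q.2 =
      ∑ ij : Fin n × Fin n, ((box n (ij.1:ℕ)) ×ˢ (box n (ij.2:ℕ))).indicator
        (fun _ => if G.Adj ij.1 ij.2 then 1 / p else 0) q := by
    intro q
    rw [gk_eq, Fintype.sum_prod_type]
  simp_rw [hrw]
  rw [integral_finset_sum]
  swap
  · intro ij _
    apply Integrable.indicator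
    · exact integrableOn_const (prodvol_lt_top A B).ne
    · exact box_meas.prod box_meas
  have hterm : ∀ ij : Fin n × Fin n,
      (∫ q in (vtxSet n A) ×ˢ (vtxSet n B),
        ((box n (ij.1:ℕ)) ×ˢ (box n (ij.2:ℕ))).indicator
          (fun _ => if G.Adj ij.1 ij.2 then 1 / p else 0) q)
      = (if ij.1 ∈ A then (1/(n:ℝ)) else 0) * (if ij.2 ∈ B then (1/(n:ℝ)) else 0)
          * (if G.Adj ij.1 ij.2 then 1 / p else 0) := by
    intro ij
    rw [setIntegral_indicator (box_meas.prod box_meas), Set.prod_inter_prod,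
      setIntegral_const, smul_eq_mul, measureReal_def,
      show (volume : Measure (ℝ × ℝ)) = Measure.prod volume volume from
        Measure.volume_eq_prod ℝ ℝ, Measure.prod_prod,
      vtxSet_inter_box, vtxSet_inter_box]
    congr 1
    rw [ENNReal.toReal_mul, apply_ite volume, apply_ite volume, box_vol, box_vol]
    congr 1 <;> [skip; skip] <;>
    · split_ifs <;> simp [ENNReal.toReal_ofReal, one_div, (by positivity : (0:ℝ) ≤ (n:ℝ)⁻¹)]
  have hterm3 : ∀ ij : Fin n × Fin n,
      (∫ q in (vtxSet n A) ×ˢ (vtxSet n B),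
        ((box n (ij.1:ℕ)) ×ˢ (box n (ij.2:ℕ))).indicator
          (fun _ => if G.Adj ij.1 ij.2 then 1 / p else 0) q)
      = if ij ∈ A ×ˢ B then (1/(n:ℝ)) * (1/(n:ℝ)) * (if G.Adj ij.1 ij.2 then 1 / p else 0)
        else 0 := by
    intro ij
    rw [hterm]
    by_cases h1 : ij.1 ∈ A <;> by_cases h2 : ij.2 ∈ B <;>
      simp [Finset.mem_product, h1, h2]
  simp_rw [hterm3]
  rw [Finset.sum_ite_mem, Finset.univ_inter, ← Finset.mul_sum, ← Finset.sum_filter,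
    Finset.sum_const, ePairs, nsmul_eq_mul]
  ring

lemma gk_mem_Icc {n : ℕ} {p : ℝ} (hp : 0 < p) (G : SimpleGraph (Fin n)) (x y : ℝ) :
    graphKernel p G x y ∈ Icc 0 (1/p) := by
  rw [graphKernel]
  split_ifs <;> constructor <;> first | positivity | rfl

lemma abs_setIntegral_le {f : ℝ × ℝ → ℝ} {M : ℝ} (hM : 0 ≤ M) (hf : ∀ q, |f q| ≤ M)
    {S T : Set ℝ} (hS : S ⊆ Icc 0 1) (hT : T ⊆ Icc 0 1) :
    |∫ q in S ×ˢ T, f q| ≤ M := by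
  have hvol : volume (S ×ˢ T) ≤ 1 := by
    calc volume (S ×ˢ T) ≤ volume ((Icc (0:ℝ) 1) ×ˢ (Icc (0:ℝ) 1)) :=
          measure_mono (Set.prod_mono hS hT)
    _ = 1 := by
        rw [show (volume : Measure (ℝ × ℝ)) = Measure.prod volume volume from
          Measure.volume_eq_prod ℝ ℝ, Measure.prod_prod, Real.volume_Icc]
        simp
  have hlt : volume (S ×ˢ T) < ⊤ := lt_of_le_of_lt hvol (by simp)
  have h1 : (volume (S ×ˢ T)).toReal ≤ 1 := by
    simpa using ENNReal.toReal_mono (by simp) hvol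
  by_cases hint : Integrable f (volume.restrict (S ×ˢ T))
  · have habs : |∫ q in S ×ˢ T, f q| ≤ ∫ q in S ×ˢ T, |f q| := by
      simpa [Real.norm_eq_abs] using
        norm_integral_le_integral_norm (μ := volume.restrict (S ×ˢ T)) f
    have h2 : (∫ q in S ×ˢ T, |f q|) ≤ ∫ _q in S ×ˢ T, M :=
      integral_mono hint.abs (integrableOn_const hlt.ne) (fun q => hf q)
    have h3 : (∫ _q in S ×ˢ T, M) = (volume (S ×ˢ T)).toReal * M := by
      rw [setIntegral_const, smul_eq_mul, measureReal_def]
    have h4 : (volume (S ×ˢ T)).toReal * M ≤ M := by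
      nlinarith [ENNReal.toReal_nonneg (a := volume (S ×ˢ T))]
    linarith
  · rw [integral_undef hint]; simpa using hM

end

/-- If `δ_□(G_n,κ) → 0` for a kernel `κ` with values in `[0,C]`, then
`(G_n)` has density bounded by `C`. -/
theorem cut_convergence_bounded_density (p : ℕ → ℝ) (hp : ∀ n, p n ∈ Ioc (0:ℝ) 1)
    (C : ℝ) (hC : 0 < C) (κ : ℝ → ℝ → ℝ) (hκ : IsKernelBdd κ C)
    (G : ∀ n, SimpleGraph (Fin n))
    (hconv : Tendsto (fun n => cutDist (graphKernel (p n) (G n)) κ) atTop (nhds 0)) :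
    DensityBoundedBy p G C := by
  obtain ⟨hκm, hκsymm, hκbd⟩ := hκ
  intro ε hε δ hδ
  have hη0 : 0 < δ * ε^2 := by positivity
  have h1 : ∀ᶠ n in atTop, cutDist (graphKernel (p n) (G n)) κ < δ * ε^2 :=
    hconv.eventually (gt_mem_nhds hη0)
  filter_upwards [h1, eventually_ge_atTop 1] with n hcd hn1
  intro A B hA hB
  obtain ⟨hq0, hq1⟩ := hp n
  have hpne : p n ≠ 0 := ne_of_gt hq0
  have hN : (1:ℝ) ≤ (n:ℝ) := by exact_mod_cast hn1
  have hN0 : (0:ℝ) < n := by linarith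
  have hNne : (n:ℝ) ≠ 0 := ne_of_gt hN0
  have ha0 : 0 < (A.card:ℝ) := lt_of_lt_of_le (by positivity) hA
  have hb0 : 0 < (B.card:ℝ) := lt_of_lt_of_le (by positivity) hB
  -- extract a near-optimal measure-preserving bijection
  rw [cutDist] at hcd
  have hne : Set.Nonempty {r | ∃ τ : ℝ → ℝ, MPBij τ ∧
      r = cutNorm (fun x y => graphKernel (p n) (G n) x y - κ (τ x) (τ y))} :=
    ⟨_, ⟨id, ⟨MeasurePreserving.id _, Set.bijOn_id _⟩, rfl⟩⟩
  obtain ⟨r, ⟨τ, hτ, rfl⟩, hrlt⟩ := exists_lt_of_csInf_lt hne hcd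
  have hτm : Measurable τ := hτ.1.measurable
  set Wf : ℝ × ℝ → ℝ :=
    fun z => graphKernel (p n) (G n) z.1 z.2 - κ (τ z.1) (τ z.2) with hWf
  have hκτm : Measurable (fun z : ℝ × ℝ => κ (τ z.1) (τ z.2)) :=
    hκm.comp ((hτm.comp measurable_fst).prodMk (hτm.comp measurable_snd))
  have hWm : Measurable Wf := (measurable_gk _ _).sub hκτm
  have hM0 : (0:ℝ) ≤ 1/(p n) + C := add_nonneg (one_div_nonneg.2 hq0.le) hC.le
  have hMB : ∀ z : ℝ × ℝ, |Wf z| ≤ 1/(p n) + C := by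
    intro z
    have h1 := gk_mem_Icc hq0 (G n) z.1 z.2
    have h2 := hκbd (τ z.1) (τ z.2)
    rw [hWf, abs_le]
    constructor <;> simp only <;> linarith [h1.1, h1.2, h2.1, h2.2]
  set S := vtxSet n A with hS
  set T := vtxSet n B with hT
  have hkey : |∫ q in S ×ˢ T, Wf q| ≤
      cutNorm (fun x y => graphKernel (p n) (G n) x y - κ (τ x) (τ y)) := by
    rw [cutNorm]
    apply le_csSup
    · refine ⟨1/(p n) + C, ?_⟩
      rintro r ⟨S', T', _, _, hsub1, hsub2, rfl⟩
      exact abs_setIntegral_le hM0 hMB hsub1 hsub2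
    · exact ⟨S, T, vtxSet_meas A, vtxSet_meas B, vtxSet_subset A, vtxSet_subset B, rfl⟩
  have hstlt : volume (S ×ˢ T) < ⊤ := prodvol_lt_top A B
  have hIκ : IntegrableOn (fun z : ℝ × ℝ => κ (τ z.1) (τ z.2)) (S ×ˢ T) volume := by
    refine Integrable.mono' (g := fun _ => C) (integrableOn_const hstlt.ne)
      hκτm.aestronglyMeasurable (ae_of_all _ (fun z => ?_))
    rw [Real.norm_eq_abs, abs_of_nonneg (hκbd _ _).1]
    exact (hκbd _ _).2
  have hIW : IntegrableOn Wf (S ×ˢ T) volume := by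
    refine Integrable.mono' (g := fun _ => 1/(p n) + C) (integrableOn_const hstlt.ne)
      hWm.aestronglyMeasurable (ae_of_all _ (fun z => ?_))
    rw [Real.norm_eq_abs]
    exact hMB z
  have hsplit : ∫ q in S ×ˢ T, graphKernel (p n) (G n) q.1 q.2
      = (∫ q in S ×ˢ T, Wf q) + ∫ q in S ×ˢ T, κ (τ q.1) (τ q.2) := by
    rw [← integral_add hIW hIκ]
    congr 1
    funext q
    simp [hWf]
  have hvolST : (volume (S ×ˢ T)).toReal = (A.card:ℝ)*(1/n) * ((B.card:ℝ)*(1/n)) := by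
    rw [hS, hT, show (volume : Measure (ℝ × ℝ)) = Measure.prod volume volume from
      Measure.volume_eq_prod ℝ ℝ, Measure.prod_prod, vtxSet_vol, vtxSet_vol,
      ENNReal.toReal_mul, ENNReal.toReal_mul, ENNReal.toReal_mul,
      ENNReal.toReal_natCast, ENNReal.toReal_natCast,
      ENNReal.toReal_ofReal (by positivity)]
  have hκint : (∫ q in S ×ˢ T, κ (τ q.1) (τ q.2))
      ≤ C * ((A.card:ℝ)*(1/n) * ((B.card:ℝ)*(1/n))) := by
    have hle : (∫ q in S ×ˢ T, κ (τ q.1) (τ q.2)) ≤ ∫ _q in S ×ˢ T, C :=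
      integral_mono hIκ (integrableOn_const hstlt.ne) (fun q => (hκbd _ _).2)
    rw [setIntegral_const, smul_eq_mul, measureReal_def, hvolST] at hle
    linarith
  have hgk : ∫ q in S ×ˢ T, graphKernel (p n) (G n) q.1 q.2
      = (ePairs (G n) A B : ℝ) * (1/(p n)) * ((1/n)*(1/n)) := integral_gk _ _ A B
  have hWle : (∫ q in S ×ˢ T, Wf q) ≤ δ*ε^2 :=
    le_trans (le_abs_self _) (hkey.trans hrlt.le)
  have hmain : (ePairs (G n) A B : ℝ) * (1/(p n)) * ((1/n)*(1/n))
      ≤ δ*ε^2 + C * ((A.card:ℝ)*(1/n) * ((B.card:ℝ)*(1/n))) := by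
    rw [← hgk]; linarith [hsplit, hWle, hκint]
  -- numeric conclusion
  set a := (A.card:ℝ)
  set b := (B.card:ℝ)
  set E := (ePairs (G n) A B : ℝ) with hE
  have hE0 : (0:ℝ) ≤ E := Nat.cast_nonneg _
  have h3 : E * (1/(p n)) ≤ δ*ε^2*(n:ℝ)^2 + C*(a*b) := by
    have hm2 := mul_le_mul_of_nonneg_right hmain
      (le_of_lt (by positivity : (0:ℝ) < (n:ℝ)^2))
    calc E * (1/(p n)) = E * (1/(p n)) * ((1/n)*(1/n)) * (n:ℝ)^2 := by
          field_simp
      _ ≤ (δ*ε^2 + C * (a*(1/n) * (b*(1/n)))) * (n:ℝ)^2 := hm2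
      _ = δ*ε^2*(n:ℝ)^2 + C*(a*b) := by field_simp
  have hab : ε^2*(n:ℝ)^2 ≤ a*b := by
    nlinarith [mul_le_mul hA hB (by positivity : (0:ℝ) ≤ ε * n) ha0.le]
  have hE4 : E ≤ (p n) * (δ*ε^2*(n:ℝ)^2 + C*(a*b)) := by
    have h5 := mul_le_mul_of_nonneg_right h3 hq0.le
    calc E = E * (1/(p n)) * (p n) := by field_simp
      _ ≤ (δ*ε^2*(n:ℝ)^2 + C*(a*b)) * (p n) := h5
      _ = (p n) * (δ*ε^2*(n:ℝ)^2 + C*(a*b)) := by ring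
  rw [dDens, div_le_iff₀ (by positivity : (0:ℝ) < p n * a * b)]
  calc E ≤ (p n) * (δ*ε^2*(n:ℝ)^2 + C*(a*b)) := hE4
    _ ≤ (p n) * (δ*(a*b) + C*(a*b)) := by
        apply mul_le_mul_of_nonneg_left _ hq0.le
        have h8 : δ*ε^2*(n:ℝ)^2 ≤ δ*(a*b) := by
          calc δ*ε^2*(n:ℝ)^2 = δ*(ε^2*(n:ℝ)^2) := by ring
            _ ≤ δ*(a*b) := mul_le_mul_of_nonneg_left hab hδ.le
        linarith
    _ = (C + δ) * (p n * a * b) := by ring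
end

section
/- Let C > 0, let κ₁ and κ₂ be kernels taking values in [0,C], and let t ≥ 1 be an odd integer. If κ₁^t(x,y) = κ₂^t(x,y) for almost every (x,y) ∈ [0,1]², then κ₁(x,y) = κ₂(x,y) for almost every (x,y) ∈ [0,1]². -/
open MeasureTheory Set Filter
open scoped ENNReal Classical

open MeasureTheory Set Function
open scoped ENNReal ComplexConjugate

noncomputable section
namespace OKPD

abbrev μ0 : Measure ℝ := volume.restrict (Icc (0:ℝ) 1)

instance : IsProbabilityMeasure μ0 := by
  constructor
  rw [Measure.restrict_apply_univ, Real.volume_Icc]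
  norm_num

abbrev H : Type := Lp ℂ 2 μ0

/-- bounded measurable kernel (no symmetry) -/
def Bdd (κ : ℝ → ℝ → ℝ) (D : ℝ) : Prop :=
  Measurable (uncurry κ) ∧ ∀ x y, |κ x y| ≤ D

variable {κ κ' : ℝ → ℝ → ℝ} {D D' : ℝ}

lemma Bdd.measC (h : Bdd κ D) : Measurable fun z : ℝ × ℝ => (κ z.1 z.2 : ℂ) :=
  Complex.measurable_ofReal.comp h.1

lemma Bdd.measC_left (h : Bdd κ D) (x : ℝ) : Measurable fun y => (κ x y : ℂ) :=
  h.measC.comp measurable_prodMk_left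

lemma integrable_Lp (f : H) : Integrable (f : ℝ → ℂ) μ0 :=
  (Lp.memLp f).integrable (by norm_num)

lemma Bdd.integrable_mul (h : Bdd κ D) {f : ℝ → ℂ} (hf : Integrable f μ0) (x : ℝ) :
    Integrable (fun y => (κ x y : ℂ) * f y) μ0 := by
  refine hf.bdd_mul (c := D) ((h.measC_left x).aestronglyMeasurable) (Filter.Eventually.of_forall fun y => ?_)
  simpa [Complex.norm_real] using h.2 x y

/-- L¹ norm bounded by L² norm (probability measure) -/
lemma l1_le_l2 (f : H) : ∫ y, ‖(f : ℝ → ℂ) y‖ ∂μ0 ≤ ‖f‖ := by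
  have hfi := integrable_Lp f
  have h1 : ENNReal.ofReal (∫ y, ‖(f : ℝ → ℂ) y‖ ∂μ0) = eLpNorm f 1 μ0 := by
    rw [eLpNorm_one_eq_lintegral_enorm, ofReal_integral_norm_eq_lintegral_enorm hfi]
  have h2 : eLpNorm (f : ℝ → ℂ) 1 μ0 ≤ eLpNorm (f : ℝ → ℂ) 2 μ0 := by
    have := eLpNorm_le_eLpNorm_mul_rpow_measure_univ (p := 1) (q := 2) (by norm_num)
      (Lp.aestronglyMeasurable f)
    simpa using this
  have h3 : eLpNorm (f : ℝ → ℂ) 2 μ0 = ENNReal.ofReal ‖f‖ := by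
    rw [Lp.norm_def, ENNReal.ofReal_toReal (Lp.eLpNorm_ne_top f)]
  rw [h3] at h2
  have := (ENNReal.ofReal_le_ofReal_iff (norm_nonneg f)).mp (h1 ▸ h2)
  exact this

/-- the raw integral-operator function -/
def Tfun (κ : ℝ → ℝ → ℝ) (f : ℝ → ℂ) : ℝ → ℂ := fun x => ∫ y, (κ x y : ℂ) * f y ∂μ0

lemma Bdd.aesm_Tfun (h : Bdd κ D) (f : H) : AEStronglyMeasurable (Tfun κ f) μ0 := by
  have : AEStronglyMeasurable (fun z : ℝ × ℝ => (κ z.1 z.2 : ℂ) * (f : ℝ → ℂ) z.2)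
      (μ0.prod μ0) := by
    refine (h.measC.aestronglyMeasurable).mul ?_
    exact (Lp.aestronglyMeasurable f).comp_quasiMeasurePreserving
      Measure.quasiMeasurePreserving_snd
  exact this.integral_prod_right'

lemma Bdd.norm_Tfun_le (h : Bdd κ D) (hD : 0 ≤ D) (f : H) (x : ℝ) :
    ‖Tfun κ f x‖ ≤ D * ‖f‖ := by
  calc ‖Tfun κ f x‖ ≤ ∫ y, ‖(κ x y : ℂ) * (f : ℝ → ℂ) y‖ ∂μ0 :=
        norm_integral_le_integral_norm _
    _ ≤ ∫ y, D * ‖(f : ℝ → ℂ) y‖ ∂μ0 := by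
        refine integral_mono ((h.integrable_mul (integrable_Lp f) x).norm) ?_ fun y => ?_
        · exact (integrable_Lp f).norm.const_mul D
        · rw [norm_mul]
          have hb : ‖(κ x y : ℂ)‖ ≤ D := by simpa [Complex.norm_real] using h.2 x y
          exact mul_le_mul_of_nonneg_right hb (norm_nonneg _)
    _ = D * ∫ y, ‖(f : ℝ → ℂ) y‖ ∂μ0 := integral_const_mul _ _
    _ ≤ D * ‖f‖ := by gcongr; exact l1_le_l2 f

lemma Bdd.memℒp_Tfun (h : Bdd κ D) (hD : 0 ≤ D) (f : H) : MemLp (Tfun κ f) 2 μ0 :=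
  MemLp.of_bound (h.aesm_Tfun f) (D * ‖f‖) (Filter.Eventually.of_forall (h.norm_Tfun_le hD f))


/-- the integral operator on L² -/
def Top (hk : Bdd κ D) (hD : 0 ≤ D) : H →L[ℂ] H :=
  LinearMap.mkContinuous
    { toFun := fun f => (hk.memℒp_Tfun hD f).toLp (Tfun κ f)
      map_add' := by
        intro f g
        rw [← MemLp.toLp_add]
        refine MemLp.toLp_congr _ _ ?_
        have hcoe : ((f + g : H) : ℝ → ℂ) =ᵐ[μ0] (f : ℝ → ℂ) + (g : ℝ → ℂ) := Lp.coeFn_add f g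
        refine Filter.Eventually.of_forall fun x => ?_
        have h1 : Tfun κ ((f + g : H) : ℝ → ℂ) x
            = ∫ y, ((κ x y : ℂ) * f y + (κ x y : ℂ) * g y) ∂μ0 := by
          refine integral_congr_ae (hcoe.mono fun y hy => ?_)
          dsimp only
          rw [hy, Pi.add_apply, mul_add]
        rw [h1, integral_add (hk.integrable_mul (integrable_Lp f) x)
          (hk.integrable_mul (integrable_Lp g) x)]
        rfl
      map_smul' := by
        intro c f
        simp only [RingHom.id_apply]
        have hcoe : ((c • f : H) : ℝ → ℂ) =ᵐ[μ0] c • (f : ℝ → ℂ) := Lp.coeFn_smul c f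
        have hae : Tfun κ ((c • f : H) : ℝ → ℂ) = c • Tfun κ (f : ℝ → ℂ) := by
          funext x
          have h1 : Tfun κ ((c • f : H) : ℝ → ℂ) x
              = ∫ y, c • ((κ x y : ℂ) * f y) ∂μ0 := by
            refine integral_congr_ae (hcoe.mono fun y hy => ?_)
            dsimp only
            rw [hy, Pi.smul_apply, smul_eq_mul, smul_eq_mul]
            ring
          rw [h1, integral_smul]
          rfl
        have h2 : (hk.memℒp_Tfun hD (c • f)).toLp (Tfun κ ((c • f : H) : ℝ → ℂ))
            = ((hk.memℒp_Tfun hD f).const_smul c).toLp (c • Tfun κ (f : ℝ → ℂ)) :=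
          MemLp.toLp_congr _ _ (Filter.Eventually.of_forall (congrFun hae))
        rw [h2, MemLp.toLp_const_smul] }
    D
    (by
      intro f
      simp only [LinearMap.coe_mk, AddHom.coe_mk]
      rw [MeasureTheory.Lp.norm_toLp _ (hk.memℒp_Tfun hD f)]
      refine ENNReal.toReal_le_of_le_ofReal (by positivity) ?_
      refine (eLpNorm_le_of_ae_bound (C := D * ‖f‖)
        (Filter.Eventually.of_forall (hk.norm_Tfun_le hD f))).trans ?_
      simp [ENNReal.ofReal_mul hD])

lemma Top_apply (hk : Bdd κ D) (hD : 0 ≤ D) (f : H) : (Top hk hD f : ℝ → ℂ) =ᵐ[μ0] Tfun κ (f : ℝ → ℂ) :=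
  (hk.memℒp_Tfun hD f).coeFn_toLp

lemma Top_eq_of (hk : Bdd κ D) (hD : 0 ≤ D) (hk' : Bdd κ D') (hD' : 0 ≤ D') :
    Top hk hD = Top hk' hD' :=
  ContinuousLinearMap.ext fun f =>
    MemLp.toLp_congr (hk.memℒp_Tfun hD f) (hk'.memℒp_Tfun hD' f) Filter.EventuallyEq.rfl

lemma Top_congr_ae (hk : Bdd κ D) (hk' : Bdd κ' D) (hD : 0 ≤ D)
    (hae : ∀ᵐ z ∂(μ0.prod μ0), κ z.1 z.2 = κ' z.1 z.2) :
    Top hk hD = Top hk' hD := by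
  refine ContinuousLinearMap.ext fun f =>
    MemLp.toLp_congr (hk.memℒp_Tfun hD f) (hk'.memℒp_Tfun hD f) ?_
  have h2 : ∀ᵐ x ∂μ0, ∀ᵐ y ∂μ0, κ x y = κ' x y := Measure.ae_ae_of_ae_prod hae
  refine h2.mono fun x hx => ?_
  exact integral_congr_ae (hx.mono fun y hy => by dsimp only; rw [hy])

/-- kernel composition -/
def kmul (κ₁ κ₂ : ℝ → ℝ → ℝ) : ℝ → ℝ → ℝ := fun x y => ∫ z, κ₁ x z * κ₂ z y ∂μ0

lemma Bdd.kmul_bdd {κ₁ κ₂ : ℝ → ℝ → ℝ} {D₁ D₂ : ℝ} (h1 : Bdd κ₁ D₁) (h2 : Bdd κ₂ D₂)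
    (hD1 : 0 ≤ D₁) (hD2 : 0 ≤ D₂) : Bdd (kmul κ₁ κ₂) (D₁ * D₂) := by
  constructor
  · have hm : StronglyMeasurable fun q : (ℝ × ℝ) × ℝ => κ₁ q.1.1 q.2 * κ₂ q.2 q.1.2 := by
      refine Measurable.stronglyMeasurable ?_
      exact (h1.1.comp (measurable_fst.fst.prodMk measurable_snd)).mul
        (h2.1.comp (measurable_snd.prodMk measurable_fst.snd))
    exact hm.integral_prod_right'.measurable
  · intro x y
    have : ‖∫ z, κ₁ x z * κ₂ z y ∂μ0‖ ≤ D₁ * D₂ * (μ0 univ).toReal := by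
      refine norm_integral_le_of_norm_le_const (Filter.Eventually.of_forall fun z => ?_)
      rw [Real.norm_eq_abs, abs_mul]
      exact mul_le_mul (h1.2 x z) (h2.2 z y) (abs_nonneg _) hD1
    simpa [Real.norm_eq_abs, kmul] using this

lemma Top_comp {κ₁ κ₂ : ℝ → ℝ → ℝ} {D₁ D₂ : ℝ} (h1 : Bdd κ₁ D₁) (h2 : Bdd κ₂ D₂)
    (hD1 : 0 ≤ D₁) (hD2 : 0 ≤ D₂) :
    Top (h1.kmul_bdd h2 hD1 hD2) (mul_nonneg hD1 hD2) = Top h1 hD1 * Top h2 hD2 := by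
  refine ContinuousLinearMap.ext fun f => Lp.ext ?_
  have hrhs : ((Top h1 hD1 * Top h2 hD2) f : ℝ → ℂ) =ᵐ[μ0]
      Tfun κ₁ ((Top h2 hD2 f : ℝ → ℂ)) := Top_apply h1 hD1 (Top h2 hD2 f)
  refine ((Top_apply _ _ f).trans ?_).trans hrhs.symm
  refine Filter.Eventually.of_forall fun x => ?_
  -- RHS at x equals iterated integral of Tfun κ₂ f
  have hg : Tfun κ₁ ((Top h2 hD2 f : ℝ → ℂ)) x
      = ∫ y, (κ₁ x y : ℂ) * (Tfun κ₂ (f : ℝ → ℂ) y) ∂μ0 := by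
    refine integral_congr_ae ((Top_apply h2 hD2 f).mono fun y hy => ?_)
    dsimp only; rw [hy]
  rw [hg]
  -- Fubini
  set F : ℝ × ℝ → ℂ := fun w => (κ₁ x w.1 : ℂ) * ((κ₂ w.1 w.2 : ℂ) * (f : ℝ → ℂ) w.2) with hF
  have haesm : AEStronglyMeasurable F (μ0.prod μ0) := by
    refine (((h1.measC_left x).comp measurable_fst).aestronglyMeasurable).mul ?_
    refine (h2.measC.aestronglyMeasurable).mul ?_
    exact (Lp.aestronglyMeasurable f).comp_quasiMeasurePreserving
      Measure.quasiMeasurePreserving_snd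
  have hFint : Integrable F (μ0.prod μ0) := by
    have hdom : Integrable (fun w : ℝ × ℝ => (D₁ * D₂) * ‖(f : ℝ → ℂ) w.2‖) (μ0.prod μ0) := by
      have := ((integrable_const (D₁ * D₂) : Integrable _ μ0).mul_prod
        (integrable_Lp f).norm)
      simpa using this
    refine hdom.mono' haesm (Filter.Eventually.of_forall fun w => ?_)
    have e1 : ‖F w‖ = ‖(κ₁ x w.1 : ℂ)‖ * (‖(κ₂ w.1 w.2 : ℂ)‖ * ‖(f : ℝ → ℂ) w.2‖) := by
      simp [hF, norm_mul]
    rw [e1]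
    have b1 : ‖(κ₁ x w.1 : ℂ)‖ ≤ D₁ := by simpa using h1.2 x w.1
    have b2 : ‖(κ₂ w.1 w.2 : ℂ)‖ ≤ D₂ := by simpa using h2.2 w.1 w.2
    calc ‖(κ₁ x w.1 : ℂ)‖ * (‖(κ₂ w.1 w.2 : ℂ)‖ * ‖(f : ℝ → ℂ) w.2‖)
        ≤ D₁ * (D₂ * ‖(f : ℝ → ℂ) w.2‖) := by
          refine mul_le_mul b1 (mul_le_mul_of_nonneg_right b2 (norm_nonneg _)) ?_ hD1
          positivity
      _ = D₁ * D₂ * ‖(f : ℝ → ℂ) w.2‖ := by ring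
  have hswap := integral_integral_swap (f := fun y z => F (y, z)) hFint
  calc Tfun (kmul κ₁ κ₂) (f : ℝ → ℂ) x
      = ∫ z, (∫ y, (κ₁ x y : ℂ) * (κ₂ y z : ℂ) ∂μ0) * (f : ℝ → ℂ) z ∂μ0 := by
        refine integral_congr_ae (Filter.Eventually.of_forall fun z => ?_)
        dsimp only
        congr 1
        rw [show kmul κ₁ κ₂ x z = ∫ y, κ₁ x y * κ₂ y z ∂μ0 from rfl]
        simp_rw [← Complex.ofReal_mul]
        exact integral_ofReal.symm
    _ = ∫ z, ∫ y, F (y, z) ∂μ0 ∂μ0 := by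
        refine integral_congr_ae (Filter.Eventually.of_forall fun z => ?_)
        dsimp only
        rw [← integral_mul_const]
        refine integral_congr_ae (Filter.Eventually.of_forall fun y => ?_)
        simp only [hF]; ring
    _ = ∫ y, ∫ z, F (y, z) ∂μ0 ∂μ0 := hswap.symm
    _ = ∫ y, (κ₁ x y : ℂ) * (Tfun κ₂ (f : ℝ → ℂ) y) ∂μ0 := by
        refine integral_congr_ae (Filter.Eventually.of_forall fun y => ?_)
        dsimp only
        rw [show Tfun κ₂ (f : ℝ → ℂ) y = ∫ z, (κ₂ y z : ℂ) * (f : ℝ → ℂ) z ∂μ0 from rfl]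
        rw [← integral_const_mul]

lemma Top_isSelfAdjoint (hk : Bdd κ D) (hD : 0 ≤ D) (hsym : ∀ x y, κ x y = κ y x) :
    IsSelfAdjoint (Top hk hD) := by
  rw [ContinuousLinearMap.isSelfAdjoint_iff_isSymmetric]
  intro f g
  show inner ℂ (Top hk hD f) g = inner ℂ f (Top hk hD g)
  rw [MeasureTheory.L2.inner_def, MeasureTheory.L2.inner_def]
  have lhs1 : ∫ x, inner ℂ ((Top hk hD f : ℝ → ℂ) x) ((g : ℝ → ℂ) x) ∂μ0
      = ∫ x, ∫ y, ((κ x y : ℂ) * (starRingEnd ℂ) ((f : ℝ → ℂ) y)) * (g : ℝ → ℂ) x ∂μ0 ∂μ0 := by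
    refine integral_congr_ae ((Top_apply hk hD f).mono fun x hx => ?_)
    dsimp only
    rw [RCLike.inner_apply', hx]
    rw [show (starRingEnd ℂ) (Tfun κ (f : ℝ → ℂ) x)
        = ∫ y, (κ x y : ℂ) * (starRingEnd ℂ) ((f : ℝ → ℂ) y) ∂μ0 from by
      rw [show Tfun κ (f : ℝ → ℂ) x = ∫ y, (κ x y:ℂ) * (f : ℝ → ℂ) y ∂μ0 from rfl,
        ← integral_conj]
      exact integral_congr_ae (Filter.Eventually.of_forall fun y => by
        simp [map_mul, Complex.conj_ofReal])]
    exact (integral_mul_const _ _).symm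
  have rhs1 : ∫ x, inner ℂ ((f : ℝ → ℂ) x) ((Top hk hD g : ℝ → ℂ) x) ∂μ0
      = ∫ y, ∫ x, ((κ x y : ℂ) * (starRingEnd ℂ) ((f : ℝ → ℂ) y)) * (g : ℝ → ℂ) x ∂μ0 ∂μ0 := by
    refine (integral_congr_ae ((Top_apply hk hD g).mono fun y hy => ?_))
    dsimp only
    rw [RCLike.inner_apply', hy]
    rw [show Tfun κ (g : ℝ → ℂ) y = ∫ x, (κ y x:ℂ) * (g : ℝ → ℂ) x ∂μ0 from rfl,
      ← integral_const_mul]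
    exact integral_congr_ae (Filter.Eventually.of_forall fun x => by
      dsimp only; rw [hsym y x]; ring)
  rw [lhs1, rhs1]
  set Φ : ℝ × ℝ → ℂ :=
    fun w => ((κ w.1 w.2 : ℂ) * (starRingEnd ℂ) ((f : ℝ → ℂ) w.2)) * (g : ℝ → ℂ) w.1 with hΦ
  have haesm : AEStronglyMeasurable Φ (μ0.prod μ0) := by
    refine (hk.measC.aestronglyMeasurable.mul ?_).mul ?_
    · exact Complex.continuous_conj.comp_aestronglyMeasurable
        ((Lp.aestronglyMeasurable f).comp_quasiMeasurePreserving
          Measure.quasiMeasurePreserving_snd)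
    · exact (Lp.aestronglyMeasurable g).comp_quasiMeasurePreserving
        Measure.quasiMeasurePreserving_fst
  have hint : Integrable Φ (μ0.prod μ0) := by
    have hdom : Integrable (fun w : ℝ × ℝ => (D * ‖(g : ℝ → ℂ) w.1‖) * ‖(f : ℝ → ℂ) w.2‖)
        (μ0.prod μ0) := ((integrable_Lp g).norm.const_mul D).mul_prod (integrable_Lp f).norm
    refine hdom.mono' haesm (Filter.Eventually.of_forall fun w => ?_)
    have b1 : ‖(κ w.1 w.2 : ℂ)‖ ≤ D := by simpa using hk.2 w.1 w.2
    have e : ‖Φ w‖ = ‖(κ w.1 w.2 : ℂ)‖ * (‖(f : ℝ → ℂ) w.2‖ * ‖(g : ℝ → ℂ) w.1‖) := by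
      rw [hΦ]; dsimp only
      rw [norm_mul, norm_mul, RCLike.norm_conj, mul_assoc, mul_comm ‖(f : ℝ → ℂ) w.2‖]
    rw [e]
    calc ‖(κ w.1 w.2 : ℂ)‖ * (‖(f : ℝ → ℂ) w.2‖ * ‖(g : ℝ → ℂ) w.1‖)
        ≤ D * (‖(f : ℝ → ℂ) w.2‖ * ‖(g : ℝ → ℂ) w.1‖) :=
          mul_le_mul_of_nonneg_right b1 (by positivity)
      _ = (D * ‖(g : ℝ → ℂ) w.1‖) * ‖(f : ℝ → ℂ) w.2‖ := by ring
  exact integral_integral_swap (f := fun x y => Φ (x, y)) hint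

lemma Bdd.kpow_bdd (hk : Bdd κ D) (hD : 0 ≤ D) : ∀ n : ℕ, Bdd (kpow κ (n+1)) (D^(n+1))
  | 0 => by simpa [kpow, pow_one] using hk
  | (n+1) => by
    have h := (hk.kpow_bdd hD n).kmul_bdd hk (by positivity) hD
    have e : kpow κ (n+2) = kmul (kpow κ (n+1)) κ := rfl
    rw [e, show D^(n+2) = D^(n+1) * D from pow_succ D (n+1)]
    exact h

lemma Top_kpow (hk : Bdd κ D) (hD : 0 ≤ D) : ∀ n : ℕ,
    Top (hk.kpow_bdd hD n) (by positivity) = (Top hk hD) ^ (n+1)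
  | 0 => (Top_eq_of (hk.kpow_bdd hD 0) (by positivity) hk hD).trans (pow_one _).symm
  | (n+1) => by
    calc Top (hk.kpow_bdd hD (n+1)) (by positivity)
        = Top ((hk.kpow_bdd hD n).kmul_bdd hk (by positivity) hD)
            (mul_nonneg (by positivity) hD) :=
          Top_eq_of _ _ _ _
      _ = Top (hk.kpow_bdd hD n) (by positivity) * Top hk hD :=
          Top_comp (hk.kpow_bdd hD n) hk (by positivity) hD
      _ = (Top hk hD) ^ (n+1) * Top hk hD := by rw [Top_kpow hk hD n]
      _ = (Top hk hD) ^ (n+2) := (pow_succ _ _).symm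

lemma kernel_integrable_prod {κ₁ : ℝ → ℝ → ℝ} {D : ℝ} (hk : Bdd κ₁ D) :
    Integrable (fun z : ℝ × ℝ => κ₁ z.1 z.2) (μ0.prod μ0) := by
  refine (integrable_const D).mono' (hk.1.aestronglyMeasurable) ?_
  exact Filter.Eventually.of_forall fun z => by simpa [Real.norm_eq_abs] using hk.2 z.1 z.2

lemma kernel_ext {κ₁ κ₂ : ℝ → ℝ → ℝ} {D : ℝ} (hk1 : Bdd κ₁ D) (hk2 : Bdd κ₂ D) (hD : 0 ≤ D)
    (hn1 : ∀ x y, 0 ≤ κ₁ x y) (hn2 : ∀ x y, 0 ≤ κ₂ x y)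
    (heq : Top hk1 hD = Top hk2 hD) :
    ∀ᵐ z ∂(μ0.prod μ0), κ₁ z.1 z.2 = κ₂ z.1 z.2 := by
  -- Step A: for every measurable T, a.e. x the T-integrals agree
  have stepA : ∀ T : Set ℝ, MeasurableSet T →
      ∀ᵐ x ∂μ0, ∫ y in T, κ₁ x y ∂μ0 = ∫ y in T, κ₂ x y ∂μ0 := by
    intro T hT
    set f : H := indicatorConstLp 2 hT (measure_ne_top μ0 T) (1:ℂ) with hf
    have h1 : Tfun κ₁ (f : ℝ → ℂ) =ᵐ[μ0] Tfun κ₂ (f : ℝ → ℂ) :=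
      (Top_apply hk1 hD f).symm.trans ((heq ▸ (Top_apply hk2 hD f) : _))
    have hind : (f : ℝ → ℂ) =ᵐ[μ0] T.indicator (fun _ => (1:ℂ)) := indicatorConstLp_coeFn
    refine h1.mono fun x hx => ?_
    have key : ∀ κ : ℝ → ℝ → ℝ, Measurable (uncurry κ) →
        Tfun κ (f : ℝ → ℂ) x = ((∫ y in T, κ x y ∂μ0 : ℝ) : ℂ) := by
      intro κ hκ
      have e1 : Tfun κ (f : ℝ → ℂ) x = ∫ y, T.indicator (fun y => (κ x y : ℂ)) y ∂μ0 := by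
        refine integral_congr_ae (hind.mono fun y hy => ?_)
        dsimp only
        rw [hy]
        by_cases hyT : y ∈ T <;> simp [hyT]
      rw [e1, integral_indicator hT]; exact integral_ofReal
    rw [key κ₁ hk1.1, key κ₂ hk2.1] at hx
    exact_mod_cast hx
  -- Step B: rectangle integrals agree
  have stepB : ∀ S T : Set ℝ, MeasurableSet S → MeasurableSet T →
      ∫ z in S ×ˢ T, κ₁ z.1 z.2 ∂(μ0.prod μ0) = ∫ z in S ×ˢ T, κ₂ z.1 z.2 ∂(μ0.prod μ0) := by
    intro S T hS hT
    rw [setIntegral_prod _ ((kernel_integrable_prod hk1).integrableOn),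
      setIntegral_prod _ ((kernel_integrable_prod hk2).integrableOn)]
    exact setIntegral_congr_ae hS ((stepA T hT).mono fun x hx _ => hx)
  -- Step C: withDensity measures agree
  set ρ₁ : Measure (ℝ × ℝ) :=
    (μ0.prod μ0).withDensity (fun z => ENNReal.ofReal (κ₁ z.1 z.2)) with hρ₁
  set ρ₂ : Measure (ℝ × ℝ) :=
    (μ0.prod μ0).withDensity (fun z => ENNReal.ofReal (κ₂ z.1 z.2)) with hρ₂
  have hlint : ∀ (κ : ℝ → ℝ → ℝ), Bdd κ D →
      ∫⁻ z, ENNReal.ofReal (κ z.1 z.2) ∂(μ0.prod μ0) ≠ ∞ := by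
    intro κ hk
    have hle : ∫⁻ z, ENNReal.ofReal (κ z.1 z.2) ∂(μ0.prod μ0) ≤ ENNReal.ofReal D := by
      calc ∫⁻ z, ENNReal.ofReal (κ z.1 z.2) ∂(μ0.prod μ0)
          ≤ ∫⁻ _z, ENNReal.ofReal D ∂(μ0.prod μ0) :=
            lintegral_mono fun z =>
              ENNReal.ofReal_le_ofReal ((le_abs_self _).trans (hk.2 z.1 z.2))
        _ = ENNReal.ofReal D := by simp
    exact ne_of_lt (lt_of_le_of_lt hle ENNReal.ofReal_lt_top)
  haveI hfin1 : IsFiniteMeasure ρ₁ := isFiniteMeasure_withDensity (hlint κ₁ hk1)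
  have hrect : ∀ s ∈ image2 (· ×ˢ ·) {s : Set ℝ | MeasurableSet s} {t : Set ℝ | MeasurableSet t},
      ρ₁ s = ρ₂ s := by
    rintro s ⟨S, (hS : MeasurableSet S), T, (hT : MeasurableSet T), rfl⟩
    rw [hρ₁, hρ₂, withDensity_apply _ (hS.prod hT), withDensity_apply _ (hS.prod hT),
      ← ofReal_integral_eq_lintegral_ofReal ((kernel_integrable_prod hk1).integrableOn)
        (Filter.Eventually.of_forall fun z => hn1 z.1 z.2),
      ← ofReal_integral_eq_lintegral_ofReal ((kernel_integrable_prod hk2).integrableOn)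
        (Filter.Eventually.of_forall fun z => hn2 z.1 z.2),
      stepB S T hS hT]
  have huniv : ρ₁ univ = ρ₂ univ := by
    have h' := hrect (univ ×ˢ univ)
      (mem_image2_of_mem (mem_setOf.mpr MeasurableSet.univ) (mem_setOf.mpr MeasurableSet.univ))
    simpa [Set.univ_prod_univ] using h'
  have hmeq : ρ₁ = ρ₂ := ext_of_generate_finite _ generateFrom_prod.symm isPiSystem_prod
    hrect huniv
  have hae : (fun z : ℝ × ℝ => ENNReal.ofReal (κ₁ z.1 z.2))
      =ᵐ[μ0.prod μ0] (fun z => ENNReal.ofReal (κ₂ z.1 z.2)) := by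
    refine (withDensity_eq_iff_of_sigmaFinite
      (f := fun z : ℝ × ℝ => ENNReal.ofReal (κ₁ z.1 z.2))
      (g := fun z : ℝ × ℝ => ENNReal.ofReal (κ₂ z.1 z.2))
      (ENNReal.measurable_ofReal.comp hk1.1).aemeasurable
      (ENNReal.measurable_ofReal.comp hk2.1).aemeasurable).mp hmeq
  refine hae.mono fun z hz => ?_
  exact (ENNReal.ofReal_eq_ofReal_iff (hn1 _ _) (hn2 _ _)).mp hz


lemma odd_pow_surj {t : ℕ} (hodd : Odd t) : Surjective fun x : ℝ => x ^ t := by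
  have ht0 : t ≠ 0 := by rintro rfl; simpa using hodd
  intro y
  rcases le_or_gt 0 y with hy | hy
  · refine ⟨y ^ ((t:ℝ)⁻¹), ?_⟩
    show (y ^ ((t:ℝ)⁻¹)) ^ t = y
    rw [← Real.rpow_natCast (y ^ ((t:ℝ)⁻¹)) t, ← Real.rpow_mul hy,
      inv_mul_cancel₀ (by exact_mod_cast ht0), Real.rpow_one]
  · refine ⟨-((-y) ^ ((t:ℝ)⁻¹)), ?_⟩
    show (-((-y) ^ ((t:ℝ)⁻¹))) ^ t = y
    rw [hodd.neg_pow, ← Real.rpow_natCast ((-y) ^ ((t:ℝ)⁻¹)) t, ← Real.rpow_mul (by linarith),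
      inv_mul_cancel₀ (by exact_mod_cast ht0), Real.rpow_one, neg_neg]

lemma odd_root_lemma {A : Type*} [CStarAlgebra A] (a b : A) (ha : IsSelfAdjoint a)
    (hb : IsSelfAdjoint b) (t : ℕ) (hodd : Odd t) (h : a ^ t = b ^ t) : a = b := by
  have hsm : StrictMono fun x : ℝ => x ^ t := hodd.strictMono_pow
  have hsurj : Surjective fun x : ℝ => x ^ t := odd_pow_surj hodd
  let e : ℝ ≃o ℝ := StrictMono.orderIsoOfSurjective _ hsm hsurj
  have hfc : Continuous (e.symm : ℝ → ℝ) := OrderIso.continuous _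
  have key : ∀ c : A, IsSelfAdjoint c → cfc (fun x : ℝ => e.symm x) (c ^ t) = c := by
    intro c hc
    have h1 : c ^ t = cfc (fun x : ℝ => x ^ t) c := (cfc_pow_id c t).symm
    rw [h1, ← cfc_comp' (fun x : ℝ => e.symm x) (fun x : ℝ => x ^ t) c
        (hfc.continuousOn) (by fun_prop)]
    have : (fun x : ℝ => e.symm (x ^ t)) = fun x : ℝ => x := by
      funext x; exact e.symm_apply_apply x
    rw [this, cfc_id' ℝ c]
  calc a = cfc (fun x : ℝ => e.symm x) (a ^ t) := (key a ha).symm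
    _ = cfc (fun x : ℝ => e.symm x) (b ^ t) := by rw [h]
    _ = b := key b hb

end OKPD

end

/-- If `κ₁^t = κ₂^t` a.e. for bounded kernels and odd `t`, then
`κ₁ = κ₂` a.e. -/
theorem odd_kernel_power_determines (C : ℝ) (hC : 0 < C)
    (κ₁ κ₂ : ℝ → ℝ → ℝ) (h₁ : IsKernelBdd κ₁ C) (h₂ : IsKernelBdd κ₂ C)
    (t : ℕ) (ht : 1 ≤ t) (hodd : Odd t)
    (hpow : ∀ᵐ q ∂(volume.restrict (Icc (0:ℝ) 1 ×ˢ Icc (0:ℝ) 1)),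
      kpow κ₁ t q.1 q.2 = kpow κ₂ t q.1 q.2) :
    ∀ᵐ q ∂(volume.restrict (Icc (0:ℝ) 1 ×ˢ Icc (0:ℝ) 1)), κ₁ q.1 q.2 = κ₂ q.1 q.2 := by
  classical
  obtain ⟨hm1, hs1, hb1'⟩ := h₁
  obtain ⟨hm2, hs2, hb2'⟩ := h₂
  have hC' : (0:ℝ) ≤ C := hC.le
  have hb1 : OKPD.Bdd κ₁ C := ⟨hm1, fun x y => by
    rw [abs_of_nonneg (hb1' x y).1]; exact (hb1' x y).2⟩
  have hb2 : OKPD.Bdd κ₂ C := ⟨hm2, fun x y => by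
    rw [abs_of_nonneg (hb2' x y).1]; exact (hb2' x y).2⟩
  have hmeas_eq : OKPD.μ0.prod OKPD.μ0 = volume.restrict (Icc (0:ℝ) 1 ×ˢ Icc (0:ℝ) 1) := by
    rw [Measure.prod_restrict, ← Measure.volume_eq_prod]
  obtain ⟨n, rfl⟩ : ∃ n, t = n + 1 := ⟨t - 1, by omega⟩
  have hpow' : ∀ᵐ z ∂(OKPD.μ0.prod OKPD.μ0),
      kpow κ₁ (n+1) z.1 z.2 = kpow κ₂ (n+1) z.1 z.2 := by
    rw [hmeas_eq]; exact hpow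
  set a := OKPD.Top hb1 hC' with ha_def
  set b := OKPD.Top hb2 hC' with hb_def
  have ha : IsSelfAdjoint a := OKPD.Top_isSelfAdjoint hb1 hC' hs1
  have hb : IsSelfAdjoint b := OKPD.Top_isSelfAdjoint hb2 hC' hs2
  have hpowop : a ^ (n+1) = b ^ (n+1) := by
    rw [← OKPD.Top_kpow hb1 hC' n, ← OKPD.Top_kpow hb2 hC' n]
    exact OKPD.Top_congr_ae _ _ _ hpow'
  have hab : a = b := OKPD.odd_root_lemma a b ha hb (n+1) hodd hpowop
  have := OKPD.kernel_ext hb1 hb2 hC' (fun x y => (hb1' x y).1) (fun x y => (hb2' x y).1) hab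
  rw [hmeas_eq] at this
  exact this
end

section
/- Let p : ℕ → (0,1] satisfy n·p(n) → ∞, and let (G_n) be a sequence of graphs with |G_n| = n such that sup_n s_p(T,G_n) < ∞ for every finite tree T. Then for each finite tree T on k vertices, the number of non-injective homomorphisms from T to G_n is o(n^k·p(n)^{k−1}) as n → ∞; in particular t_p(T,G_n) − s_p(T,G_n) → 0 and t_p(T,G_n) is bounded. -/
open MeasureTheory Set Filter
open scoped ENNReal Classical

noncomputable section AuxTreeNoninj

private lemma homCount_eq' {k n : ℕ} (F : SimpleGraph (Fin k)) (G : SimpleGraph (Fin n)) :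
    homCount F G = (Finset.univ.filter fun φ : Fin k → Fin n => IsHom F G φ).card := by
  rw [homCount]
  have e : (F →g G) ≃ {φ : Fin k → Fin n // IsHom F G φ} :=
    { toFun := fun f => ⟨f, fun i j h => f.map_rel h⟩
      invFun := fun φ => ⟨φ.1, fun {i j} h => φ.2 i j h⟩
      left_inv := fun f => rfl
      right_inv := fun φ => rfl }
  rw [Nat.card_congr e, Nat.card_eq_fintype_card, Fintype.card_subtype]

private lemma embCount_eq' {k n : ℕ} (F : SimpleGraph (Fin k)) (G : SimpleGraph (Fin n)) :
    embCount F G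
      = (Finset.univ.filter fun φ : Fin k → Fin n => IsHom F G φ ∧ Function.Injective φ).card := by
  rw [embCount]
  have e : {f : F →g G // Function.Injective f}
      ≃ {φ : Fin k → Fin n // IsHom F G φ ∧ Function.Injective φ} :=
    { toFun := fun f => ⟨f.1, fun i j h => f.1.map_rel h, f.2⟩
      invFun := fun φ => ⟨⟨φ.1, fun {i j} h => φ.2.1 i j h⟩, φ.2.2⟩
      left_inv := fun f => rfl
      right_inv := fun φ => rfl }
  rw [Nat.card_congr e, Nat.card_eq_fintype_card, Fintype.card_subtype]

private lemma hom_filter_split' {k n : ℕ} (F : SimpleGraph (Fin k)) (G : SimpleGraph (Fin n)) :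
    (Finset.univ.filter fun φ : Fin k → Fin n => IsHom F G φ).card
      = (Finset.univ.filter fun φ : Fin k → Fin n => IsHom F G φ ∧ Function.Injective φ).card +
      (Finset.univ.filter fun φ : Fin k → Fin n =>
        IsHom F G φ ∧ ¬ Function.Injective φ).card := by
  rw [← Finset.filter_filter, ← Finset.filter_filter,
    Finset.card_filter_add_card_filter_not]

private lemma edgeCount_tree' {k : ℕ} (T : SimpleGraph (Fin k)) (hT : T.IsTree) :
    edgeCount T = k - 1 := by
  have h := hT.card_edgeFinset
  rw [Fintype.card_fin] at h
  rw [edgeCount, Nat.card_eq_fintype_card, ← SimpleGraph.edgeFinset_card]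
  omega

private lemma reach_del' {V : Type*} (H : SimpleGraph V) (u v : V)
    (hr : (H \ SimpleGraph.fromEdgeSet {s(u, v)}).Reachable u v) :
    ∀ x y : V, H.Reachable x y → (H \ SimpleGraph.fromEdgeSet {s(u, v)}).Reachable x y := by
  intro x y hxy
  obtain ⟨w⟩ := hxy
  induction w with
  | nil => exact SimpleGraph.Reachable.refl _
  | @cons a b c hab q ih =>
      refine SimpleGraph.Reachable.trans ?_ ih
      by_cases he : s(a, b) = s(u, v)
      · rcases Sym2.eq_iff.mp he with ⟨rfl, rfl⟩ | ⟨rfl, rfl⟩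
        · exact hr
        · exact hr.symm
      · refine SimpleGraph.Adj.reachable ?_
        simp only [SimpleGraph.sdiff_adj, SimpleGraph.fromEdgeSet_adj]
        exact ⟨hab, by simp [he]⟩

private lemma exists_spanning_tree' {N : ℕ} (H : SimpleGraph (Fin N)) (hc : H.Connected) :
    ∃ T ≤ H, T.IsTree := by
  classical
  generalize hn : H.edgeSet.ncard = M
  induction M using Nat.strong_induction_on generalizing H with
  | _ M ih =>
    by_cases ha : H.IsAcyclic
    · exact ⟨H, le_rfl, ⟨hc, ha⟩⟩
    · rw [SimpleGraph.isAcyclic_iff_forall_adj_isBridge] at ha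
      push_neg at ha
      obtain ⟨u, v, hadj, hnb⟩ := ha
      rw [SimpleGraph.isBridge_iff] at hnb
      push_neg at hnb
      have hr : (H \ SimpleGraph.fromEdgeSet {s(u, v)}).Reachable u v := hnb
      set H' := H \ SimpleGraph.fromEdgeSet {s(u, v)} with hH'
      have hc' : H'.Connected := by
        haveI := hc.nonempty
        exact ⟨fun x y => reach_del' H u v hr x y (hc.preconnected x y)⟩
      have hsub : H'.edgeSet ⊆ H.edgeSet := by
        intro e he
        exact (SimpleGraph.edgeSet_subset_edgeSet.mpr (sdiff_le)) he
      have hne : s(u, v) ∈ H.edgeSet ∧ s(u, v) ∉ H'.edgeSet := by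
        constructor
        · exact hadj
        · simp [hH', SimpleGraph.edgeSet_sdiff]
      have hlt : H'.edgeSet.ncard < M := by
        rw [← hn]
        refine Set.ncard_lt_ncard ⟨hsub, fun hs => hne.2 (hs hne.1)⟩ (Set.toFinite _)
      obtain ⟨T, hT, hTt⟩ := ih _ hlt H' hc' rfl
      exact ⟨T, le_trans hT sdiff_le, hTt⟩

private lemma merge_lemma' {m : ℕ} (T : SimpleGraph (Fin (m+2))) (hconn : T.Connected)
    (i j : Fin (m+2)) (hij : i ≠ j) (hnadj : ¬ T.Adj i j) :
    ∃ T' : SimpleGraph (Fin (m+1)), T'.IsTree ∧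
      ∀ (n : ℕ) (G : SimpleGraph (Fin n)),
        (Finset.univ.filter fun φ : Fin (m+2) → Fin n => IsHom T G φ ∧ φ i = φ j).card
          ≤ (Finset.univ.filter fun ψ : Fin (m+1) → Fin n => IsHom T' G ψ).card := by
  classical
  set σ : Fin (m+1) → Fin (m+2) := j.succAbove with hσ
  have hσinj : Function.Injective σ := Fin.succAbove_right_injective
  set H : SimpleGraph (Fin (m+1)) := SimpleGraph.fromRel (fun a b =>
    T.Adj (σ a) (σ b) ∨ (σ a = i ∧ T.Adj j (σ b)) ∨ (σ b = i ∧ T.Adj (σ a) j)) with hH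
  have hρ : ∃ ρ : Fin (m+2) → Fin (m+1), ∀ v, σ (ρ v) = if v = j then i else v := by
    refine ⟨fun v => if h : v = j then (Fin.exists_succAbove_eq hij).choose
      else (Fin.exists_succAbove_eq h).choose, fun v => ?_⟩
    by_cases h : v = j
    · simp only [h, dif_pos, if_pos]
      exact (Fin.exists_succAbove_eq hij).choose_spec
    · simp only [h, dif_neg, if_neg, not_false_iff]
      exact (Fin.exists_succAbove_eq h).choose_spec
  obtain ⟨ρ, hρ⟩ := hρ
  have hρhom : ∀ u v, T.Adj u v → H.Adj (ρ u) (ρ v) := by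
    intro u v huv
    have hu := hρ u
    have hv := hρ v
    rw [hH, SimpleGraph.fromRel_adj]
    by_cases hu' : u = j <;> by_cases hv' : v = j
    · exact absurd (hu' ▸ hv' ▸ huv) (T.irrefl)
    · rw [if_pos hu'] at hu
      rw [if_neg hv'] at hv
      have hvi : v ≠ i := by
        intro h
        exact hnadj ((hu' ▸ h ▸ huv).symm)
      refine ⟨fun h => hvi ?_, Or.inl (Or.inr (Or.inl ⟨hu, by rw [hv, ← hu']; exact huv⟩))⟩
      · rw [← hv, ← h, hu]
    · rw [if_neg hu'] at hu
      rw [if_pos hv'] at hv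
      have hui : u ≠ i := by
        intro h
        exact hnadj (h ▸ hv' ▸ huv)
      refine ⟨fun h => hui ?_, Or.inl (Or.inr (Or.inr ⟨hv, by rw [hu, ← hv']; exact huv⟩))⟩
      · rw [← hu, h, hv]
    · rw [if_neg hu'] at hu
      rw [if_neg hv'] at hv
      refine ⟨fun h => huv.ne ?_, Or.inl (Or.inl (by rw [hu, hv]; exact huv))⟩
      · rw [← hu, h, hv]
  have hρsurj : Function.Surjective ρ := by
    intro a
    refine ⟨σ a, hσinj ?_⟩
    rw [hρ (σ a), if_neg (Fin.succAbove_ne j a)]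
  have hHconn : H.Connected :=
    SimpleGraph.Connected.map ⟨ρ, fun {u v} h => hρhom u v h⟩ hρsurj hconn
  obtain ⟨T', hT'le, hT'tree⟩ := exists_spanning_tree' H hHconn
  refine ⟨T', hT'tree, fun n G => ?_⟩
  have step1 : (Finset.univ.filter fun φ : Fin (m+2) → Fin n => IsHom T G φ ∧ φ i = φ j).card
      ≤ (Finset.univ.filter fun ψ : Fin (m+1) → Fin n => IsHom H G ψ).card := by
    refine Finset.card_le_card_of_injOn (fun φ => φ ∘ σ) ?_ ?_
    · intro φ hφ
      simp only [Finset.mem_coe, Finset.mem_filter, Finset.mem_univ, true_and] at hφ ⊢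
      obtain ⟨hhom, heq⟩ := hφ
      intro a b hab
      rw [hH, SimpleGraph.fromRel_adj] at hab
      obtain ⟨hne, hr⟩ := hab
      have key : ∀ a b : Fin (m+1),
          (T.Adj (σ a) (σ b) ∨ (σ a = i ∧ T.Adj j (σ b)) ∨ (σ b = i ∧ T.Adj (σ a) j)) →
          G.Adj (φ (σ a)) (φ (σ b)) := by
        intro a b hr
        rcases hr with h | ⟨ha, hb⟩ | ⟨hb, ha⟩
        · exact hhom _ _ h
        · rw [ha, heq]
          exact hhom _ _ hb
        · rw [hb, heq]
          exact hhom _ _ ha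
      rcases hr with hr | hr
      · exact key a b hr
      · exact (key b a hr).symm
    · intro φ hφ φ' hφ' heq
      simp only [Finset.mem_coe, Finset.mem_filter, Finset.mem_univ, true_and] at hφ hφ'
      funext v
      by_cases hv : v = j
      · obtain ⟨z, hz⟩ := Fin.exists_succAbove_eq hij
        have h2 : φ (σ z) = φ' (σ z) := congrFun heq z
        rw [hσ, hz] at h2
        rw [hv, ← hφ.2, ← hφ'.2, h2]
      · obtain ⟨z, hz⟩ := Fin.exists_succAbove_eq hv
        have h2 : φ (σ z) = φ' (σ z) := congrFun heq z
        rwa [hσ, hz] at h2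
  refine le_trans step1 (Finset.card_le_card ?_)
  intro ψ hψ
  simp only [Finset.mem_filter, Finset.mem_univ, true_and] at hψ ⊢
  exact fun a b hab => hψ a b (hT'le hab)

private lemma descFactorial_div_pow_tendsto' (k : ℕ) :
    Tendsto (fun n : ℕ => ((n.descFactorial k : ℝ)) / (n:ℝ)^k) atTop (nhds 1) := by
  have h1 : Tendsto (fun n : ℕ => ∏ i ∈ Finset.range k, (1 - (i:ℝ)/n)) atTop (nhds 1) := by
    have h2 : Tendsto (fun n : ℕ => ∏ i ∈ Finset.range k, (1 - (i:ℝ)/n)) atTop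
        (nhds (∏ i ∈ Finset.range k, (1:ℝ))) := by
      refine tendsto_finset_prod _ fun i _ => ?_
      have h6 := (tendsto_const_div_atTop_nhds_zero_nat (i:ℝ))
      have h3 := tendsto_const_nhds (x := (1:ℝ)) (f := (atTop : Filter ℕ)) |>.sub h6
      simpa using h3
    simpa using h2
  refine h1.congr' ?_
  filter_upwards [eventually_ge_atTop (max k 1)] with n hn
  have hk : k ≤ n := le_trans (le_max_left _ _) hn
  have h1' : 1 ≤ n := le_trans (le_max_right _ _) hn
  have hn0 : (n:ℝ) ≠ 0 := by positivity
  have hcast : ((n.descFactorial k : ℕ) : ℝ) = ∏ i ∈ Finset.range k, ((n:ℝ) - i) := by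
    rw [Nat.descFactorial_eq_prod_range]
    rw [Nat.cast_prod]
    refine Finset.prod_congr rfl fun i hi => ?_
    rw [Finset.mem_range] at hi
    rw [Nat.cast_sub (le_trans (le_of_lt hi) hk)]
  rw [hcast]
  rw [show ((n:ℝ))^k = ∏ _i ∈ Finset.range k, (n:ℝ) by
    rw [Finset.prod_const, Finset.card_range]]
  rw [← Finset.prod_div_distrib]
  refine Finset.prod_congr rfl fun i _ => ?_
  field_simp

private lemma noninj_eventually' (p : ℕ → ℝ) (hp : ∀ n, p n ∈ Set.Ioc (0:ℝ) 1)
    (hpn : Tendsto (fun n : ℕ => (n:ℝ) * p n) atTop atTop)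
    (G : ∀ n, SimpleGraph (Fin n))
    (htree : ∀ (m : ℕ) (T : SimpleGraph (Fin m)), T.IsTree →
      ∃ M : ℝ, ∀ n, sDen (p n) T (G n) ≤ M) :
    ∀ (k : ℕ) (T : SimpleGraph (Fin k)), T.IsTree → ∀ ε > (0:ℝ), ∀ᶠ n in atTop,
      ((Finset.univ.filter fun φ : Fin k → Fin n =>
        IsHom T (G n) φ ∧ ¬ Function.Injective φ).card : ℝ) ≤ ε * ((n:ℝ)^k * p n ^ (k-1)) := by
  intro k
  induction k using Nat.strong_induction_on with
  | _ k ih =>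
  match k, ih with
  | 0, ih =>
    intro T hT
    exact absurd hT.isConnected.nonempty (not_nonempty_iff.mpr inferInstance)
  | 1, ih =>
    intro T hT ε hε
    filter_upwards with n
    have he : (Finset.univ.filter fun φ : Fin 1 → Fin n =>
        IsHom T (G n) φ ∧ ¬ Function.Injective φ) = ∅ := by
      ext φ
      simp [Function.injective_of_subsingleton φ]
    rw [he]
    have h9 : (0:ℝ) ≤ ε * ((n:ℝ)^1 * p n ^ 0) := by
      have := (hp n).1
      positivity
    simpa using h9
  | (m+2), ih =>
    intro T hT ε hε
    have homB : ∀ T' : SimpleGraph (Fin (m+1)), T'.IsTree → ∃ C : ℝ, 0 ≤ C ∧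
        ∀ᶠ n in atTop,
          ((Finset.univ.filter fun ψ : Fin (m+1) → Fin n => IsHom T' (G n) ψ).card : ℝ)
            ≤ C * ((n:ℝ)^(m+1) * p n ^ m) := by
      intro T' hT'
      obtain ⟨M, hM⟩ := htree (m+1) T' hT'
      have hIH := ih (m+1) (by omega) T' hT' 1 one_pos
      refine ⟨max M 0 + 1, by positivity, ?_⟩
      filter_upwards [hIH, eventually_ge_atTop (m+1)] with n hn hnm
      have hp0 := (hp n).1
      have hsplit := hom_filter_split' T' (G n)
      have hemb : ((Finset.univ.filter fun φ : Fin (m+1) → Fin n =>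
          IsHom T' (G n) φ ∧ Function.Injective φ).card : ℝ)
            ≤ max M 0 * (p n ^ m * (n.descFactorial (m+1) : ℝ)) := by
        have hM' := hM n
        rw [sDen, edgeCount_tree' T' hT'] at hM'
        simp only [Fintype.card_fin, Nat.add_sub_cancel] at hM'
        have hD : (0:ℝ) < p n ^ m * (n.descFactorial (m+1) : ℝ) := by
          have h8 : 0 < n.descFactorial (m+1) := Nat.pos_of_ne_zero (fun h0 => by
            rw [Nat.descFactorial_eq_zero_iff_lt] at h0; omega)
          positivity
        rw [div_le_iff₀ hD] at hM'
        rw [embCount_eq'] at hM'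
        calc ((Finset.univ.filter fun φ : Fin (m+1) → Fin n =>
            IsHom T' (G n) φ ∧ Function.Injective φ).card : ℝ)
            ≤ M * (p n ^ m * (n.descFactorial (m+1) : ℝ)) := hM'
          _ ≤ max M 0 * (p n ^ m * (n.descFactorial (m+1) : ℝ)) := by
              apply mul_le_mul_of_nonneg_right (le_max_left M 0)
              positivity
      have hdesc : ((n.descFactorial (m+1) : ℝ)) ≤ (n:ℝ)^(m+1) := by
        rw [show ((n:ℝ)^(m+1)) = ((n^(m+1) : ℕ) : ℝ) by push_cast; ring]
        exact_mod_cast Nat.descFactorial_le_pow n (m+1)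
      have hcasteq : ((Finset.univ.filter fun ψ : Fin (m+1) → Fin n =>
            IsHom T' (G n) ψ).card : ℝ)
          = ((Finset.univ.filter fun φ : Fin (m+1) → Fin n =>
              IsHom T' (G n) φ ∧ Function.Injective φ).card : ℝ)
            + ((Finset.univ.filter fun φ : Fin (m+1) → Fin n =>
              IsHom T' (G n) φ ∧ ¬ Function.Injective φ).card : ℝ) := by
        exact_mod_cast congrArg (fun x : ℕ => (x:ℝ)) hsplit
      rw [hcasteq]
      have h1 : ((Finset.univ.filter fun φ : Fin (m+1) → Fin n =>
          IsHom T' (G n) φ ∧ Function.Injective φ).card : ℝ)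
            ≤ max M 0 * ((n:ℝ)^(m+1) * p n ^ m) := by
        refine le_trans hemb ?_
        have h2 : p n ^ m * (n.descFactorial (m+1) : ℝ) ≤ (n:ℝ)^(m+1) * p n ^ m := by
          rw [mul_comm]
          exact mul_le_mul_of_nonneg_right hdesc (by positivity)
        exact mul_le_mul_of_nonneg_left h2 (le_max_right M 0)
      have h2 : ((Finset.univ.filter fun φ : Fin (m+1) → Fin n =>
          IsHom T' (G n) φ ∧ ¬ Function.Injective φ).card : ℝ)
            ≤ (n:ℝ)^(m+1) * p n ^ m := by
        simpa using hn
      linarith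
    have pairB : ∀ q : Fin (m+2) × Fin (m+2), q.1 ≠ q.2 → ∃ C : ℝ, 0 ≤ C ∧
        ∀ᶠ n in atTop,
          ((Finset.univ.filter fun φ : Fin (m+2) → Fin n =>
            IsHom T (G n) φ ∧ φ q.1 = φ q.2).card : ℝ) ≤ C * ((n:ℝ)^(m+1) * p n ^ m) := by
      intro q hq
      by_cases hadj : T.Adj q.1 q.2
      · refine ⟨0, le_rfl, ?_⟩
        filter_upwards with n
        have he : (Finset.univ.filter fun φ : Fin (m+2) → Fin n =>
            IsHom T (G n) φ ∧ φ q.1 = φ q.2) = ∅ := by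
          ext φ
          simp only [Finset.mem_filter, Finset.mem_univ, true_and, Finset.notMem_empty,
            iff_false, not_and]
          intro hhom heq
          exact (G n).irrefl (heq ▸ hhom q.1 q.2 hadj)
        rw [he]
        simp
      · obtain ⟨T', hT't, hle⟩ := merge_lemma' T hT.isConnected q.1 q.2 hq hadj
        obtain ⟨C, hC0, hC⟩ := homB T' hT't
        refine ⟨C, hC0, ?_⟩
        filter_upwards [hC] with n hn
        exact le_trans (Nat.cast_le.mpr (hle n (G n))) hn
    set Cf : Fin (m+2) × Fin (m+2) → ℝ := fun q =>
      if h : q.1 ≠ q.2 then (pairB q h).choose else 0 with hCf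
    have hCf0 : ∀ q, 0 ≤ Cf q := by
      intro q
      simp only [hCf]
      by_cases h : q.1 ≠ q.2
      · rw [dif_pos h]; exact (pairB q h).choose_spec.1
      · rw [dif_neg h]
    have hCfev : ∀ q ∈ (Finset.univ : Finset (Fin (m+2))).offDiag,
        ∀ᶠ n in atTop,
          ((Finset.univ.filter fun φ : Fin (m+2) → Fin n =>
            IsHom T (G n) φ ∧ φ q.1 = φ q.2).card : ℝ) ≤ Cf q * ((n:ℝ)^(m+1) * p n ^ m) := by
      intro q hq
      rw [Finset.mem_offDiag] at hq
      have hne : q.1 ≠ q.2 := hq.2.2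
      have h3 := (pairB q hne).choose_spec.2
      have heq : Cf q = (pairB q hne).choose := by simp only [hCf]; rw [dif_pos hne]
      rw [heq]
      exact h3
    have hall : ∀ᶠ n in atTop, ∀ q ∈ (Finset.univ : Finset (Fin (m+2))).offDiag,
        ((Finset.univ.filter fun φ : Fin (m+2) → Fin n =>
          IsHom T (G n) φ ∧ φ q.1 = φ q.2).card : ℝ) ≤ Cf q * ((n:ℝ)^(m+1) * p n ^ m) :=
      (Filter.eventually_all_finset _).mpr hCfev
    set C : ℝ := ∑ q ∈ (Finset.univ : Finset (Fin (m+2))).offDiag, Cf q with hCdef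
    have hC0 : 0 ≤ C := Finset.sum_nonneg fun q _ => hCf0 q
    have hCeps := hpn.eventually_ge_atTop (C / ε)
    filter_upwards [hall, hCeps] with n hn hne
    have hp0 := (hp n).1
    have hsub : (Finset.univ.filter fun φ : Fin (m+2) → Fin n =>
        IsHom T (G n) φ ∧ ¬ Function.Injective φ)
        ⊆ (Finset.univ : Finset (Fin (m+2))).offDiag.biUnion
          (fun q => Finset.univ.filter fun φ => IsHom T (G n) φ ∧ φ q.1 = φ q.2) := by
      intro φ hφ
      simp only [Finset.mem_filter, Finset.mem_univ, true_and] at hφ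
      obtain ⟨hhom, hninj⟩ := hφ
      obtain ⟨a, b, hab, hne'⟩ := Function.not_injective_iff.mp hninj
      rw [Finset.mem_biUnion]
      exact ⟨(a, b), Finset.mem_offDiag.mpr ⟨Finset.mem_univ _, Finset.mem_univ _, hne'⟩,
        Finset.mem_filter.mpr ⟨Finset.mem_univ _, hhom, hab⟩⟩
    have hcard : ((Finset.univ.filter fun φ : Fin (m+2) → Fin n =>
        IsHom T (G n) φ ∧ ¬ Function.Injective φ).card : ℝ)
        ≤ ∑ q ∈ (Finset.univ : Finset (Fin (m+2))).offDiag,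
            ((Finset.univ.filter fun φ : Fin (m+2) → Fin n =>
              IsHom T (G n) φ ∧ φ q.1 = φ q.2).card : ℝ) := by
      have hN := le_trans (Finset.card_le_card hsub) Finset.card_biUnion_le
      calc ((Finset.univ.filter fun φ : Fin (m+2) → Fin n =>
          IsHom T (G n) φ ∧ ¬ Function.Injective φ).card : ℝ)
          ≤ ((∑ q ∈ (Finset.univ : Finset (Fin (m+2))).offDiag,
              (Finset.univ.filter fun φ : Fin (m+2) → Fin n =>
                IsHom T (G n) φ ∧ φ q.1 = φ q.2).card : ℕ) : ℝ) := Nat.cast_le.mpr hN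
        _ = _ := by push_cast; rfl
    have hsum : ∑ q ∈ (Finset.univ : Finset (Fin (m+2))).offDiag,
            ((Finset.univ.filter fun φ : Fin (m+2) → Fin n =>
              IsHom T (G n) φ ∧ φ q.1 = φ q.2).card : ℝ)
        ≤ C * ((n:ℝ)^(m+1) * p n ^ m) := by
      rw [hCdef, Finset.sum_mul]
      exact Finset.sum_le_sum hn
    have hfin : C * ((n:ℝ)^(m+1) * p n ^ m) ≤ ε * ((n:ℝ)^(m+2) * p n ^ (m+1)) := by
      have hX : (0:ℝ) ≤ (n:ℝ)^(m+1) * p n ^ m := by positivity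
      have hC' : C ≤ ε * ((n:ℝ) * p n) := (div_le_iff₀' hε).mp hne
      calc C * ((n:ℝ)^(m+1) * p n ^ m) ≤ (ε * ((n:ℝ) * p n)) * ((n:ℝ)^(m+1) * p n ^ m) :=
            mul_le_mul_of_nonneg_right hC' hX
        _ = ε * ((n:ℝ)^(m+2) * p n ^ (m+1)) := by ring
    calc ((Finset.univ.filter fun φ : Fin (m+2) → Fin n =>
        IsHom T (G n) φ ∧ ¬ Function.Injective φ).card : ℝ)
        ≤ C * ((n:ℝ)^(m+1) * p n ^ m) := le_trans hcard hsum
      _ ≤ ε * ((n:ℝ)^(m+2) * p n ^ (m+1)) := hfin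

end AuxTreeNoninj

/-- For trees, non-injective homomorphisms are negligible:
`hom − emb = o(n^k p^{k−1})`, so `t_p(T,G_n) − s_p(T,G_n) → 0` and `t_p` is bounded. -/
theorem tree_noninjective_negligible (p : ℕ → ℝ) (hp : ∀ n, p n ∈ Ioc (0:ℝ) 1)
    (hpn : Tendsto (fun n : ℕ => (n:ℝ) * p n) atTop atTop)
    (G : ∀ n, SimpleGraph (Fin n))
    (htree : ∀ (m : ℕ) (T : SimpleGraph (Fin m)), T.IsTree →
      ∃ M : ℝ, ∀ n, sDen (p n) T (G n) ≤ M) :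
    ∀ (k : ℕ) (T : SimpleGraph (Fin k)), T.IsTree →
      (Tendsto (fun n => ((homCount T (G n) : ℝ) - (embCount T (G n) : ℝ)) /
          ((n:ℝ) ^ k * p n ^ (k - 1))) atTop (nhds 0)) ∧
      Tendsto (fun n => tDen (p n) T (G n) - sDen (p n) T (G n)) atTop (nhds 0) ∧
      ∃ M : ℝ, ∀ n, tDen (p n) T (G n) ≤ M := by
  intro k T hT
  have hk1 : 1 ≤ k := by
    rcases hT.isConnected.nonempty with ⟨v⟩
    exact v.pos
  have hnum : ∀ n : ℕ, (homCount T (G n) : ℝ) - embCount T (G n)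
      = ((Finset.univ.filter fun φ : Fin k → Fin n =>
        IsHom T (G n) φ ∧ ¬ Function.Injective φ).card : ℝ) := by
    intro n
    rw [homCount_eq', embCount_eq', hom_filter_split']
    push_cast
    ring
  have hA : Tendsto (fun n => ((homCount T (G n) : ℝ) - (embCount T (G n) : ℝ)) /
      ((n:ℝ) ^ k * p n ^ (k - 1))) atTop (nhds 0) := by
    rw [Metric.tendsto_atTop]
    intro ε hε
    have hev := noninj_eventually' p hp hpn G htree k T hT (ε/2) (by positivity)
    obtain ⟨N, hN⟩ := Filter.eventually_atTop.mp (hev.and (eventually_ge_atTop 1))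
    refine ⟨N, fun n hn => ?_⟩
    obtain ⟨h1, h2⟩ := hN n hn
    have hp0 := (hp n).1
    have hnR : (0:ℝ) < (n:ℝ) := by exact_mod_cast h2
    have hd : (0:ℝ) < (n:ℝ)^k * p n ^ (k-1) := by positivity
    rw [Real.dist_eq, sub_zero, hnum n, abs_of_nonneg (by positivity)]
    have hle : ((Finset.univ.filter fun φ : Fin k → Fin n =>
        IsHom T (G n) φ ∧ ¬ Function.Injective φ).card : ℝ) / ((n:ℝ)^k * p n ^ (k-1))
        ≤ ε/2 := by
      rw [div_le_iff₀ hd]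
      linarith [h1]
    exact lt_of_le_of_lt hle (half_lt_self hε)
  obtain ⟨M0, hM0⟩ := htree k T hT
  set M := max M0 0 with hMdef
  have hsden_nonneg : ∀ n, 0 ≤ sDen (p n) T (G n) := by
    intro n
    rw [sDen]
    have hp0 := (hp n).1
    positivity
  have hsdenM : ∀ n, sDen (p n) T (G n) ≤ M := fun n => le_trans (hM0 n) (le_max_left _ _)
  have hB2 : Tendsto (fun n : ℕ =>
      sDen (p n) T (G n) * ((n.descFactorial k : ℝ)/(n:ℝ)^k - 1)) atTop (nhds 0) := by
    have hg : Tendsto (fun n : ℕ => M * |((n.descFactorial k : ℝ)/(n:ℝ)^k - 1)|)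
        atTop (nhds 0) := by
      have h4 := ((descFactorial_div_pow_tendsto' k).sub
        (tendsto_const_nhds (x := (1:ℝ)) (f := (atTop : Filter ℕ)))).abs
      have h5 := h4.const_mul M
      simpa using h5
    refine squeeze_zero_norm (fun n => ?_) hg
    rw [Real.norm_eq_abs, abs_mul, abs_of_nonneg (hsden_nonneg n)]
    exact mul_le_mul_of_nonneg_right (hsdenM n) (abs_nonneg _)
  have hBsum := hA.add hB2
  have heqv : (fun n => tDen (p n) T (G n) - sDen (p n) T (G n)) =ᶠ[atTop]
      (fun n => ((homCount T (G n) : ℝ) - (embCount T (G n) : ℝ)) / ((n:ℝ)^k * p n^(k-1))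
        + sDen (p n) T (G n) * ((n.descFactorial k : ℝ)/(n:ℝ)^k - 1)) := by
    filter_upwards [eventually_ge_atTop k, eventually_ge_atTop 1] with n hnk hn1
    have hp0 := (hp n).1
    have hnR : (0:ℝ) < (n:ℝ) := by exact_mod_cast hn1
    have hdlt : (0:ℝ) < (n.descFactorial k : ℝ) := by
      have h5 : 0 < n.descFactorial k := Nat.pos_of_ne_zero (fun h0 => by
        rw [Nat.descFactorial_eq_zero_iff_lt] at h0; omega)
      exact_mod_cast h5
    simp only [tDen, sDen, edgeCount_tree' T hT, Fintype.card_fin]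
    field_simp
    ring
  have hb : Tendsto (fun n => tDen (p n) T (G n) - sDen (p n) T (G n)) atTop (nhds 0) := by
    refine Tendsto.congr' heqv.symm ?_
    simpa using hBsum
  obtain ⟨B, hB⟩ := hb.bddAbove_range
  refine ⟨hA, hb, B + M, fun n => ?_⟩
  have h6 := hB (Set.mem_range_self n)
  have h7 := hsdenM n
  change tDen (p n) T (G n) - sDen (p n) T (G n) ≤ B at h6
  linarith
end
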